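/- arXiv:1402.5536 — 12 statements merged into one kernel-verified Lean document; each statement's English description precedes it below -/
import Mathlib

section
/- Edges of the Farey graph do not cross: if v₁ > v₂ > v₃ > v₄ are rational numbers, then it is impossible that both d(v₁,v₃) = 1 and d(v₂,v₄) = 1, where d is the Farey distance. -/
/-- The Farey distance of two rationals (written in lowest terms):
`d(x,y) = |x.num · y.den − y.num · x.den|`. -/
def fareyDist (x y : ℚ) : ℕ := (x.num * (y.den : ℤ) - y.num * (x.den : ℤ)).natAbs

lemma det_pos {x y : ℚ} (h : y < x) : 0 < x.num * (y.den : ℤ) - y.num * (x.den : ℤ) := by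
  rw [Rat.lt_iff] at h; omega

/-- Edges of the Farey graph do not cross: for rationals `v₁ > v₂ > v₃ > v₄` it is
impossible that both `d(v₁,v₃) = 1` and `d(v₂,v₄) = 1`. -/
theorem stmt2 (v₁ v₂ v₃ v₄ : ℚ) (h12 : v₂ < v₁) (h23 : v₃ < v₂) (h34 : v₄ < v₃) :
    ¬(fareyDist v₁ v₃ = 1 ∧ fareyDist v₂ v₄ = 1) := by
  rintro ⟨h13, h24⟩
  have d12 := det_pos h12
  have d23 := det_pos h23
  have d34 := det_pos h34
  have d14 := det_pos (h34.trans (h23.trans h12))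
  have d13 := det_pos (h23.trans h12)
  have d24 := det_pos (h34.trans h23)
  unfold fareyDist at h13 h24
  have e13 : v₁.num * (v₃.den : ℤ) - v₃.num * (v₁.den : ℤ) = 1 := by omega
  have e24 : v₂.num * (v₄.den : ℤ) - v₄.num * (v₂.den : ℤ) = 1 := by omega
  have key : (v₁.num * (v₃.den : ℤ) - v₃.num * (v₁.den : ℤ)) *
      (v₂.num * (v₄.den : ℤ) - v₄.num * (v₂.den : ℤ)) =
      (v₁.num * (v₂.den : ℤ) - v₂.num * (v₁.den : ℤ)) *
      (v₃.num * (v₄.den : ℤ) - v₄.num * (v₃.den : ℤ)) +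
      (v₁.num * (v₄.den : ℤ) - v₄.num * (v₁.den : ℤ)) *
      (v₂.num * (v₃.den : ℤ) - v₃.num * (v₂.den : ℤ)) := by ring
  rw [e13, e24] at key
  nlinarith
end

section
/- Any two consecutive numbers of a Farey series are joined by an edge of the Farey graph: if a/b > c/d are rationals in lowest terms lying in [0,1] with b ≤ N and d ≤ N, and no rational with denominator (in lowest terms) at most N lies strictly between c/d and a/b, then a·d − b·c = 1. -/
/-- Any two consecutive numbers of a Farey series are joined by an edge of the
Farey graph: if `x > y` are rationals in `[0,1]` with denominators (in lowest terms)
at most `N`, and no rational with denominator at most `N` lies strictly between them,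
then `x.num · y.den − y.num · x.den = 1`. -/
theorem stmt3 (N : ℕ) (x y : ℚ) (hxy : y < x) (hy0 : 0 ≤ y) (hx1 : x ≤ 1)
    (hxN : x.den ≤ N) (hyN : y.den ≤ N)
    (hcons : ∀ z : ℚ, z.den ≤ N → ¬(y < z ∧ z < x)) :
    x.num * (y.den : ℤ) - y.num * (x.den : ℤ) = 1 := by
  set a : ℤ := x.num with ha
  set c : ℤ := y.num with hc
  set b : ℤ := (x.den : ℤ) with hb
  set d : ℤ := (y.den : ℤ) with hd
  have hb0 : 0 < b := by rw [hb]; exact_mod_cast x.pos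
  have hd0 : 0 < d := by rw [hd]; exact_mod_cast y.pos
  -- coprimality of y.num, y.den gives Bézout coefficients
  have hcop : IsCoprime c d := by
    rw [Int.isCoprime_iff_gcd_eq_one]
    exact_mod_cast y.reduced
  obtain ⟨u, v, huv⟩ := hcop
  -- huv : u * c + v * d = 1
  -- choose q ≡ -u mod d with N - d < q ≤ N
  set r : ℤ := ((N : ℤ) - (-u)) % d with hr
  have hr0 : 0 ≤ r := Int.emod_nonneg _ hd0.ne'
  have hrd : r < d := Int.emod_lt_of_pos _ hd0
  set q : ℤ := (N : ℤ) - r with hq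
  set k : ℤ := ((N : ℤ) - (-u)) / d with hk
  have hqk : q = -u + d * k := by
    have := Int.mul_ediv_add_emod ((N : ℤ) - (-u)) d
    rw [hq, hr, hk]; linarith
  set p : ℤ := v + c * k with hp
  have key : p * d - c * q = 1 := by rw [hp, hqk]; ring_nf; linarith [huv]
  have hqN : q ≤ (N : ℤ) := by simp [hq]; linarith
  have hqgt : (N : ℤ) - d < q := by simp [hq]; linarith
  have hdN : d ≤ (N : ℤ) := by rw [hd]; exact_mod_cast hyN
  have hbN : b ≤ (N : ℤ) := by rw [hb]; exact_mod_cast hxN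
  have hq0 : 0 < q := by linarith
  -- z = p / q in lowest terms
  have hpq : IsCoprime p q := ⟨d, -c, by linarith [key]⟩
  have hpqn : Nat.Coprime p.natAbs q.natAbs := by
    rwa [Int.isCoprime_iff_gcd_eq_one] at hpq
  set z : ℚ := (p : ℚ) / (q : ℚ) with hz
  have hznum : z.num = p := Rat.num_div_eq_of_coprime hq0 hpqn
  have hzden : (z.den : ℤ) = q := Rat.den_div_eq_of_coprime hq0 hpqn
  have hzdenN : z.den ≤ N := by
    have : (z.den : ℤ) ≤ (N : ℤ) := by rw [hzden]; exact hqN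
    exact_mod_cast this
  -- y < z since c * q < p * d
  have hyq : y = (c : ℚ) / (d : ℚ) := by rw [hc, hd]; exact (Rat.num_div_den y).symm
  have hxq : x = (a : ℚ) / (b : ℚ) := by rw [ha, hb]; exact (Rat.num_div_den x).symm
  have hdQ : (0 : ℚ) < (d : ℚ) := by exact_mod_cast hd0
  have hqQ : (0 : ℚ) < (q : ℚ) := by exact_mod_cast hq0
  have hbQ : (0 : ℚ) < (b : ℚ) := by exact_mod_cast hb0
  have hyz : y < z := by
    rw [hyq, hz, div_lt_div_iff₀ hdQ hqQ]
    have : c * q < p * d := by linarith [key]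
    exact_mod_cast this
  have hxz : x ≤ z := by
    by_contra hlt
    push_neg at hlt
    exact hcons z hzdenN ⟨hyz, hlt⟩
  rcases eq_or_lt_of_le hxz with heq | hlt
  · -- x = z, so a = p, b = q
    have h1 : a = p := by rw [ha, heq, hznum]
    have h2 : b = q := by rw [hb, heq, hzden]
    rw [h1, h2]; linarith [key]
  · -- x strictly between y and z forces b > N, contradiction
    exfalso
    have h1 : c * b < a * d := by
      rw [hyq, hxq, div_lt_div_iff₀ hdQ hbQ] at hxy
      exact_mod_cast hxy
    have h2 : a * q < p * b := by
      rw [hxq, hz, div_lt_div_iff₀ hbQ hqQ] at hlt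
      exact_mod_cast hlt
    have h3 : 1 ≤ a * d - c * b := by linarith
    have h4 : 1 ≤ p * b - a * q := by linarith
    have hident : q * (a * d - c * b) + d * (p * b - a * q) = b := by
      have : q * (a * d - c * b) + d * (p * b - a * q) = b * (p * d - c * q) := by ring
      rw [this, key]; ring
    nlinarith [hq0, hd0, h3, h4]
end

section
/- Every Farey series forms a triangulated polygon in the Farey graph; concretely, for N ≥ 2, every new term of the Farey series of order N forms a triangle with its two neighbors: if k/N is in lowest terms with 0 < k < N, and p₁/q₁ > k/N > p₂/q₂ are the elements of the Farey series of order N immediately adjacent to k/N (i.e. p₁/q₁ and k/N are consecutive, and k/N and p₂/q₂ are consecutive in the series of order N), then q₁ < N, q₂ < N, d(p₁/q₁, p₂/q₂) = 1, and k = p₁ + p₂, N = q₁ + q₂, so that {p₁/q₁, k/N, p₂/q₂} is a 3-cycle in the Farey graph. -/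
/-- Membership in the Farey series of order `N`: a rational in `[0,1]` whose
denominator in lowest terms is at most `N`. -/
def InFareySeries (N : ℕ) (z : ℚ) : Prop := 0 ≤ z ∧ z ≤ 1 ∧ z.den ≤ N

lemma div_lt_rat_iff (a b : ℤ) (hb : 0 < b) (z : ℚ) :
    (a : ℚ) / (b : ℚ) < z ↔ a * (z.den : ℤ) < z.num * b := by
  have hb' : (0:ℚ) < (b:ℚ) := by exact_mod_cast hb
  have hd' : (0:ℚ) < (z.den:ℚ) := by exact_mod_cast z.pos
  rw [div_lt_iff₀ hb']
  nth_rewrite 1 [← Rat.num_div_den z]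
  rw [div_mul_eq_mul_div, lt_div_iff₀ hd']
  constructor <;> intro h <;> exact_mod_cast h

lemma rat_lt_div_iff (a b : ℤ) (hb : 0 < b) (z : ℚ) :
    z < (a : ℚ) / (b : ℚ) ↔ z.num * b < a * (z.den : ℤ) := by
  have hb' : (0:ℚ) < (b:ℚ) := by exact_mod_cast hb
  have hd' : (0:ℚ) < (z.den:ℚ) := by exact_mod_cast z.pos
  rw [lt_div_iff₀ hb']
  nth_rewrite 1 [← Rat.num_div_den z]
  rw [div_mul_eq_mul_div, div_lt_iff₀ hd']
  constructor <;> intro h <;> exact_mod_cast h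

lemma farey_next (N k : ℕ) (hk0 : 0 < k) (hkN : k < N) (hcop : Nat.Coprime k N)
    (r : ℚ) (hr : InFareySeries N r)
    (hrx : (k : ℚ) / (N : ℚ) < r)
    (hcons : ∀ z : ℚ, InFareySeries N z → ¬((k : ℚ) / (N : ℚ) < z ∧ z < r)) :
    r.num * (N : ℤ) - (k : ℤ) * (r.den : ℤ) = 1 := by
  have hN2 : 2 ≤ N := lt_of_le_of_lt hk0 hkN
  have hNZ : (0:ℤ) < (N:ℤ) := by exact_mod_cast (show 0 < N by omega)
  have hk1 : (1:ℤ) ≤ (k:ℤ) := by exact_mod_cast hk0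
  have hkN' : (k:ℤ) < (N:ℤ) := by exact_mod_cast hkN
  have hxint : (k : ℚ) / (N : ℚ) = ((k:ℤ) : ℚ) / ((N:ℤ) : ℚ) := by push_cast; ring
  -- Bezout
  have hbez : (1:ℤ) = k * Nat.gcdA k N + N * Nat.gcdB k N := by
    have := Nat.gcd_eq_gcd_ab k N
    rwa [hcop, Nat.cast_one] at this
  set a := Nat.gcdA k N with ha
  set dd : ℤ := (-a) % N with hddd
  have hdd0 : 0 ≤ dd := Int.emod_nonneg _ (by omega)
  have hddN : dd < N := Int.emod_lt_of_pos _ hNZ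
  have hdvd : (N:ℤ) ∣ (k:ℤ) * dd + 1 := by
    have ht : dd = -a - N * (-a / N) := Int.emod_def (-a) N
    exact ⟨Nat.gcdB k N - k * (-a / N), by linear_combination (k:ℤ) * ht + hbez⟩
  obtain ⟨cc, hcc⟩ := hdvd
  have hdd1 : 1 ≤ dd := by
    rcases eq_or_lt_of_le hdd0 with h | h
    · exfalso
      have h1 : (N:ℤ) ∣ 1 := ⟨cc, by rw [← hcc, ← h]; ring⟩
      have := Int.le_of_dvd one_pos h1
      omega
    · omega
  have hcc1 : 1 ≤ cc := by
    have h : 0 < (N:ℤ) * cc := by nlinarith [hk1, hdd1]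
    rcases mul_pos_iff.mp h with ⟨_, h2⟩ | ⟨h1, _⟩ <;> omega
  have hccdd : cc ≤ dd := by
    have h3 : (N:ℤ) * cc ≤ (N:ℤ) * dd := by
      nlinarith [mul_le_mul_of_nonneg_right (show (k:ℤ) ≤ (N:ℤ) - 1 by omega) hdd0]
    exact le_of_mul_le_mul_left h3 hNZ
  have hcopq : Nat.Coprime cc.natAbs dd.natAbs := by
    have : IsCoprime cc dd := ⟨(N:ℤ), -(k:ℤ), by linear_combination -hcc⟩
    exact Int.isCoprime_iff_gcd_eq_one.mp this
  set q : ℚ := (cc:ℚ)/(dd:ℚ) with hq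
  have hddQ : (0:ℚ) < (dd:ℚ) := by exact_mod_cast hdd1
  have hqnum : q.num = cc := Rat.num_div_eq_of_coprime (by omega) hcopq
  have hqden : (q.den:ℤ) = dd := Rat.den_div_eq_of_coprime (by omega) hcopq
  have hqF : InFareySeries N q := by
    refine ⟨by positivity, ?_, ?_⟩
    · rw [hq, div_le_one hddQ]; exact_mod_cast hccdd
    · have : (q.den:ℤ) < (N:ℤ) := by rw [hqden]; exact hddN
      exact_mod_cast this.le
  have hxq : (k : ℚ) / (N : ℚ) < q := by
    rw [hxint, div_lt_rat_iff _ _ hNZ, hqnum, hqden]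
    linarith [hcc]
  rcases lt_trichotomy r q with h | h | h
  · exfalso
    have h1 : (k:ℤ) * r.den < r.num * N := by
      rw [hxint, div_lt_rat_iff _ _ hNZ r] at hrx; exact hrx
    have h2 : r.num * dd < cc * r.den :=
      (rat_lt_div_iff cc dd (by omega) r).mp (by rwa [← hq])
    have hdenN : (r.den:ℤ) ≤ (N:ℤ) := by exact_mod_cast hr.2.2
    have hid : (r.den:ℤ) * (cc * N - k * dd)
        = N * (cc * r.den - r.num * dd) + dd * (r.num * N - k * r.den) := by ring
    have e1 : (1:ℤ) ≤ cc * r.den - r.num * dd := by omega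
    have e2 : (1:ℤ) ≤ r.num * N - k * r.den := by omega
    have hcn : cc * N - k * dd = 1 := by linarith [hcc]
    rw [hcn, mul_one] at hid
    nlinarith [mul_le_mul_of_nonneg_left e1 hNZ.le, mul_le_mul_of_nonneg_left e2 hdd0]
  · rw [h, hqnum, hqden]; linarith [hcc]
  · exact absurd ⟨hxq, h⟩ (hcons q hqF)

lemma farey_prev (N k : ℕ) (hk0 : 0 < k) (hkN : k < N) (hcop : Nat.Coprime k N)
    (s : ℚ) (hs : InFareySeries N s)
    (hxs : s < (k : ℚ) / (N : ℚ))
    (hcons : ∀ z : ℚ, InFareySeries N z → ¬(s < z ∧ z < (k : ℚ) / (N : ℚ))) :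
    (k : ℤ) * (s.den : ℤ) - s.num * (N : ℤ) = 1 := by
  have hN2 : 2 ≤ N := lt_of_le_of_lt hk0 hkN
  have hNZ : (0:ℤ) < (N:ℤ) := by exact_mod_cast (show 0 < N by omega)
  have hk1 : (1:ℤ) ≤ (k:ℤ) := by exact_mod_cast hk0
  have hkN' : (k:ℤ) < (N:ℤ) := by exact_mod_cast hkN
  have hxint : (k : ℚ) / (N : ℚ) = ((k:ℤ) : ℚ) / ((N:ℤ) : ℚ) := by push_cast; ring
  have hbez : (1:ℤ) = k * Nat.gcdA k N + N * Nat.gcdB k N := by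
    have := Nat.gcd_eq_gcd_ab k N
    rwa [hcop, Nat.cast_one] at this
  set a := Nat.gcdA k N with ha
  set dd : ℤ := a % N with hddd
  have hdd0 : 0 ≤ dd := Int.emod_nonneg _ (by omega)
  have hddN : dd < N := Int.emod_lt_of_pos _ hNZ
  have hdvd : (N:ℤ) ∣ (k:ℤ) * dd - 1 := by
    have ht : dd = a - N * (a / N) := Int.emod_def a N
    exact ⟨-(Nat.gcdB k N) - k * (a / N), by linear_combination (k:ℤ) * ht - hbez⟩
  obtain ⟨cc, hcc⟩ := hdvd
  have hdd1 : 1 ≤ dd := by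
    rcases eq_or_lt_of_le hdd0 with h | h
    · exfalso
      have h1 : (N:ℤ) ∣ 1 := ⟨-cc, by rw [show (1:ℤ) = -(k*dd-1) + k*dd by ring, hcc, ← h]; ring⟩
      have := Int.le_of_dvd one_pos h1
      omega
    · omega
  have hcc0 : 0 ≤ cc := by
    have h : (N:ℤ) * 0 ≤ (N:ℤ) * cc := by nlinarith [hk1, hdd1]
    exact le_of_mul_le_mul_left h hNZ
  have hccdd : cc ≤ dd := by
    have h3 : (N:ℤ) * cc ≤ (N:ℤ) * dd := by
      nlinarith [mul_le_mul_of_nonneg_right (show (k:ℤ) ≤ (N:ℤ) - 1 by omega) hdd0]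
    exact le_of_mul_le_mul_left h3 hNZ
  have hcopq : Nat.Coprime cc.natAbs dd.natAbs := by
    have : IsCoprime cc dd := ⟨-(N:ℤ), (k:ℤ), by linear_combination hcc⟩
    exact Int.isCoprime_iff_gcd_eq_one.mp this
  set q : ℚ := (cc:ℚ)/(dd:ℚ) with hq
  have hddQ : (0:ℚ) < (dd:ℚ) := by exact_mod_cast hdd1
  have hqnum : q.num = cc := Rat.num_div_eq_of_coprime (by omega) hcopq
  have hqden : (q.den:ℤ) = dd := Rat.den_div_eq_of_coprime (by omega) hcopq
  have hqF : InFareySeries N q := by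
    refine ⟨by positivity, ?_, ?_⟩
    · rw [hq, div_le_one hddQ]; exact_mod_cast hccdd
    · have : (q.den:ℤ) < (N:ℤ) := by rw [hqden]; exact hddN
      exact_mod_cast this.le
  have hqx : q < (k : ℚ) / (N : ℚ) := by
    rw [hxint, rat_lt_div_iff _ _ hNZ, hqnum, hqden]
    linarith [hcc]
  rcases lt_trichotomy s q with h | h | h
  · exact absurd ⟨h, hqx⟩ (hcons q hqF)
  · rw [h, hqnum, hqden]; linarith [hcc]
  · exfalso
    have h1 : s.num * N < (k:ℤ) * s.den := by
      rw [hxint, rat_lt_div_iff _ _ hNZ s] at hxs; exact hxs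
    have h2 : cc * s.den < s.num * dd :=
      (div_lt_rat_iff cc dd (by omega) s).mp (by rwa [← hq])
    have hdenN : (s.den:ℤ) ≤ (N:ℤ) := by exact_mod_cast hs.2.2
    have hid : (s.den:ℤ) * (k * dd - cc * N)
        = dd * (k * s.den - s.num * N) + N * (s.num * dd - cc * s.den) := by ring
    have e1 : (1:ℤ) ≤ k * s.den - s.num * N := by omega
    have e2 : (1:ℤ) ≤ s.num * dd - cc * s.den := by omega
    have hcn : (k:ℤ) * dd - cc * N = 1 := by linarith [hcc]
    rw [hcn, mul_one] at hid
    nlinarith [mul_le_mul_of_nonneg_left e1 hdd0, mul_le_mul_of_nonneg_left e2 hNZ.le]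


/-- Every new term `k/N` of the Farey series of order `N` forms a triangle with its
two neighbors `p₁/q₁ > k/N > p₂/q₂`: the neighbors have denominators `< N`, are joined
by a Farey edge, and `k/N` is their mediant. -/
theorem stmt4 (N k : ℕ) (hk0 : 0 < k) (hkN : k < N) (hcop : Nat.Coprime k N)
    (r s : ℚ) (hr : InFareySeries N r) (hs : InFareySeries N s)
    (hrx : (k : ℚ) / (N : ℚ) < r) (hxs : s < (k : ℚ) / (N : ℚ))
    (hconsr : ∀ z : ℚ, InFareySeries N z → ¬((k : ℚ) / (N : ℚ) < z ∧ z < r))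
    (hconss : ∀ z : ℚ, InFareySeries N z → ¬(s < z ∧ z < (k : ℚ) / (N : ℚ))) :
    r.den < N ∧ s.den < N ∧
    r.num * (s.den : ℤ) - s.num * (r.den : ℤ) = 1 ∧
    (k : ℤ) = r.num + s.num ∧ (N : ℤ) = (r.den : ℤ) + (s.den : ℤ) := by
  have hA := farey_next N k hk0 hkN hcop r hr hrx hconsr
  have hB := farey_prev N k hk0 hkN hcop s hs hxs hconss
  have hN2 : 2 ≤ N := lt_of_le_of_lt hk0 hkN
  have hNZ : (0:ℤ) < (N:ℤ) := by exact_mod_cast (show 0 < N by omega)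
  have hrdN : (r.den:ℤ) ≤ (N:ℤ) := by exact_mod_cast hr.2.2
  have hsdN : (s.den:ℤ) ≤ (N:ℤ) := by exact_mod_cast hs.2.2
  have hrd1 : (1:ℤ) ≤ (r.den:ℤ) := by exact_mod_cast r.pos
  have hsd1 : (1:ℤ) ≤ (s.den:ℤ) := by exact_mod_cast s.pos
  have hrdlt : (r.den:ℤ) < (N:ℤ) := by
    rcases lt_or_eq_of_le hrdN with h | h
    · exact h
    · exfalso
      have h1 : (N:ℤ) ∣ 1 := ⟨r.num - k, by rw [← hA, h]; ring⟩
      have := Int.le_of_dvd one_pos h1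
      omega
  have hsdlt : (s.den:ℤ) < (N:ℤ) := by
    rcases lt_or_eq_of_le hsdN with h | h
    · exact h
    · exfalso
      have h1 : (N:ℤ) ∣ 1 := ⟨k - s.num, by rw [← hB, h]; ring⟩
      have := Int.le_of_dvd one_pos h1
      omega
  have key : (N:ℤ) * (r.num * s.den - s.num * r.den) = r.den + s.den := by
    linear_combination (s.den:ℤ) * hA + (r.den:ℤ) * hB
  have hD1 : r.num * (s.den:ℤ) - s.num * (r.den:ℤ) = 1 := by
    set D := r.num * (s.den:ℤ) - s.num * (r.den:ℤ) with hD
    have hDpos : 1 ≤ D := by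
      have h : (N:ℤ) * 0 < (N:ℤ) * D := by rw [key]; omega
      have := lt_of_mul_lt_mul_left h hNZ.le
      omega
    have hDlt : D < 2 := by
      have h : (N:ℤ) * D < (N:ℤ) * 2 := by rw [key]; omega
      exact lt_of_mul_lt_mul_left h hNZ.le
    omega
  have hsum : (N:ℤ) = (r.den:ℤ) + (s.den:ℤ) := by
    rw [hD1, mul_one] at key; omega
  have hk : (k:ℤ) = r.num + s.num := by
    have h : (N:ℤ) * (r.num + s.num) = (N:ℤ) * k := by
      linear_combination hA - hB - (k:ℤ) * hsum
    exact (mul_left_cancel₀ hNZ.ne' h).symm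
  refine ⟨by exact_mod_cast hrdlt, by exact_mod_cast hsdlt, hD1, hk, hsum⟩
end

section
/- In a Farey n-gon, the Farey distance d(v_{i−1}, v_{i+1}) equals the number of triangles of the triangulation incident at v_i; concretely: if (v_0, …, v_{n−1}) is a Farey n-gon and 1 ≤ i ≤ n−2, then det(v_{i−1}, v_{i+1}) = (the number of indices j with 0 ≤ j ≤ n−1, j ≠ i, and |det(v_i, v_j)| = 1) − 1. -/
/-- `fdet (a,b) (c,d) = a*d - b*c`. -/
def fdet (u v : ℤ × ℤ) : ℤ := u.1 * v.2 - u.2 * v.1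

/-- A primitive vector `(a,b) ∈ ℤ²`: `gcd(a,b) = 1`, `b ≥ 0`, and `a = 1` whenever `b = 0`. -/
def IsPrimitive (u : ℤ × ℤ) : Prop := Int.gcd u.1 u.2 = 1 ∧ 0 ≤ u.2 ∧ (u.2 = 0 → u.1 = 1)

/-- A Farey `n`-gon: primitive vectors `v 0, …, v (n-1)` with `det(v i, v j) > 0`
for `i < j < n`, `det(v i, v (i+1)) = 1` for `i + 1 < n`, and `det(v 0, v (n-1)) = 1`. -/
def IsFareyPolygon (n : ℕ) (v : ℕ → ℤ × ℤ) : Prop :=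
  (∀ i < n, IsPrimitive (v i)) ∧
  (∀ i j, i < j → j < n → 0 < fdet (v i) (v j)) ∧
  (∀ i, i + 1 < n → fdet (v i) (v (i + 1)) = 1) ∧
  fdet (v 0) (v (n - 1)) = 1

lemma fdet_plucker (a b x y : ℤ × ℤ) :
    fdet a x * fdet b y - fdet a y * fdet b x = fdet a b * fdet x y := by
  simp only [fdet]; ring

lemma fdet_neg_right (u x : ℤ × ℤ) : fdet u (-x) = - fdet u x := by
  simp only [fdet, Prod.fst_neg, Prod.snd_neg]; ring

lemma fdet_neg_left (u x : ℤ × ℤ) : fdet (-u) x = - fdet u x := by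
  simp only [fdet, Prod.fst_neg, Prod.snd_neg]; ring

lemma fdet_antisymm (u x : ℤ × ℤ) : fdet u x = - fdet x u := by
  simp only [fdet]; ring

lemma fdet_self (u : ℤ × ℤ) : fdet u u = 0 := by simp only [fdet]; ring

/-- Core gap lemma: between two consecutive `1`s of `c`, `e` increases by exactly `1`. -/
lemma farey_core (c e : ℕ → ℤ) (a b : ℕ) (hab : a < b)
    (hc : ∀ j, a ≤ j → j ≤ b → 1 ≤ c j)
    (hW : ∀ j, a ≤ j → j + 1 ≤ b → c j * e (j + 1) - c (j + 1) * e j = 1)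
    (hca : c a = 1) (hcb : c b = 1)
    (hmid : ∀ j, a < j → j < b → c j ≠ 1) :
    e b = e a + 1 := by
  -- lower bound: s j = e j - e a * c j ≥ 1 for a+1 ≤ j ≤ b
  have hs : ∀ j, a + 1 ≤ j → j ≤ b → 1 ≤ e j - e a * c j := by
    intro j hj
    induction j, hj using Nat.le_induction with
    | base =>
      intro hb
      have h := hW a (le_refl a) hb
      rw [hca] at h
      nlinarith
    | succ j hj ih =>
      intro hjb
      have hsj := ih (by omega)
      have h := hW j (by omega) hjb
      have h1 : 1 ≤ c j := hc j (by omega) (by omega)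
      have h2 : 1 ≤ c (j + 1) := hc (j + 1) (by omega) (by omega)
      nlinarith
  have hlow : e a + 1 ≤ e b := by
    have := hs b (by omega) (le_refl b)
    rw [hcb] at this; linarith
  -- upper bound
  by_cases hb1 : b = a + 1
  · subst hb1
    have h := hW a (le_refl a) (le_refl _)
    rw [hca, hcb] at h; linarith
  · -- b ≥ a + 2; r j = e j - (e a + 1) * c j ≤ -1 for a+1 ≤ j ≤ b-1
    have hab2 : a + 2 ≤ b := by omega
    have hr : ∀ j, a + 1 ≤ j → j ≤ b - 1 → e j - (e a + 1) * c j ≤ -1 := by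
      intro j hj
      induction j, hj using Nat.le_induction with
      | base =>
        intro hb'
        have h := hW a (le_refl a) (by omega)
        rw [hca] at h
        have h2 : 1 ≤ c (a + 1) := hc (a + 1) (by omega) (by omega)
        have h3 : c (a + 1) ≠ 1 := hmid (a + 1) (by omega) (by omega)
        have h4 : 2 ≤ c (a + 1) := by omega
        nlinarith
      | succ j hj ih =>
        intro hjb
        have hrj := ih (by omega)
        have h := hW j (by omega) (by omega)
        have h1 : 1 ≤ c j := hc j (by omega) (by omega)
        have h2 : 1 ≤ c (j + 1) := hc (j + 1) (by omega) (by omega)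
        have h3 : c (j + 1) ≠ 1 := hmid (j + 1) (by omega) (by omega)
        have h4 : 2 ≤ c (j + 1) := by omega
        nlinarith
    have hrb : e (b - 1) - (e a + 1) * c (b - 1) ≤ -1 := hr (b - 1) (by omega) (le_refl _)
    obtain ⟨b', rfl⟩ : ∃ b', b = b' + 1 := ⟨b - 1, by omega⟩
    simp only [Nat.add_sub_cancel] at hrb
    have h := hW b' (by omega) (le_refl _)
    rw [hcb] at h
    have h1 : 1 ≤ c b' := hc b' (by omega) (by omega)
    nlinarith

/-- Counting lemma. -/
lemma farey_count : ∀ (m : ℕ) (c e : ℕ → ℤ), 1 ≤ m →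
    (∀ j, 1 ≤ j → j ≤ m → 1 ≤ c j) →
    (∀ j, 1 ≤ j → j + 1 ≤ m → c j * e (j + 1) - c (j + 1) * e j = 1) →
    c 1 = 1 → c m = 1 →
    e m - e 1 = (((Finset.Icc 1 m).filter (fun j => c j = 1)).card : ℤ) - 1 := by
  intro m
  induction m using Nat.strong_induction_on with
  | _ m IH =>
    intro c e hm hc hW hc1 hcm
    rcases eq_or_lt_of_le hm with h1 | h1
    · -- m = 1
      subst h1
      have : (Finset.Icc 1 1).filter (fun j => c j = 1) = {1} := by
        ext j
        simp only [Finset.mem_filter, Finset.mem_Icc, Finset.mem_singleton]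
        constructor
        · rintro ⟨⟨h1', h2'⟩, _⟩; omega
        · rintro rfl; exact ⟨⟨le_refl _, le_refl _⟩, hc1⟩
      rw [this]; simp
    · -- m ≥ 2
      set S := (Finset.Icc 1 (m - 1)).filter (fun j => c j = 1) with hS
      have hSne : S.Nonempty := ⟨1, by
        simp only [hS, Finset.mem_filter, Finset.mem_Icc]
        exact ⟨⟨le_refl _, by omega⟩, hc1⟩⟩
      set a := S.max' hSne with ha
      have haS : a ∈ S := S.max'_mem hSne
      have ha1 : 1 ≤ a ∧ a ≤ m - 1 ∧ c a = 1 := by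
        have := haS
        simp only [hS, Finset.mem_filter, Finset.mem_Icc] at this
        tauto
      have hmid : ∀ j, a < j → j < m → c j ≠ 1 := by
        intro j hja hjm hcj
        have hjS : j ∈ S := by
          simp only [hS, Finset.mem_filter, Finset.mem_Icc]
          omega
        have := S.le_max' j hjS
        omega
      have heb : e m = e a + 1 :=
        farey_core c e a m (by omega) (fun j h1 h2 => hc j (by omega) h2)
          (fun j h1 h2 => hW j (by omega) h2) ha1.2.2 hcm hmid
      have hIH := IH a (by omega) c e (by omega)
        (fun j hj1 hj2 => hc j hj1 (by omega))
        (fun j hj1 hj2 => hW j hj1 (by omega)) hc1 ha1.2.2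
      have hcard : (Finset.Icc 1 m).filter (fun j => c j = 1)
          = insert m ((Finset.Icc 1 a).filter (fun j => c j = 1)) := by
        ext j
        simp only [Finset.mem_filter, Finset.mem_Icc, Finset.mem_insert]
        constructor
        · rintro ⟨⟨hj1, hjm⟩, hcj⟩
          by_cases hj : j = m
          · left; exact hj
          · right
            refine ⟨⟨hj1, ?_⟩, hcj⟩
            by_contra hja
            exact hmid j (by omega) (by omega) hcj
        · rintro (rfl | ⟨⟨hj1, hja⟩, hcj⟩)
          · exact ⟨⟨by omega, le_refl _⟩, hcm⟩
          · exact ⟨⟨hj1, by omega⟩, hcj⟩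
      have hnot : m ∉ (Finset.Icc 1 a).filter (fun j => c j = 1) := by
        simp only [Finset.mem_filter, Finset.mem_Icc]
        omega
      rw [hcard, Finset.card_insert_of_notMem hnot]
      push_cast
      omega

/-- In a Farey `n`-gon, the Farey distance `d(v_{i−1}, v_{i+1})` equals the number of
triangles of the triangulation incident at `v_i`, i.e. the number of vertices of the
polygon joined to `v_i` by a Farey edge, minus one. -/
theorem stmt6 (n : ℕ) (hn : 3 ≤ n) (v : ℕ → ℤ × ℤ) (hv : IsFareyPolygon n v)
    (i : ℕ) (hi1 : 1 ≤ i) (hi2 : i ≤ n - 2) :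
    fdet (v (i - 1)) (v (i + 1)) =
      (((Finset.range n).filter
          (fun j => j ≠ i ∧ (fdet (v i) (v j)).natAbs = 1)).card : ℤ) - 1 := by
  obtain ⟨hprim, hpos, hstep, hclose⟩ := hv
  set w : ℕ → ℤ × ℤ := fun j => if i + j < n then v (i + j) else -v (i + j - n) with hw
  have hw1 : w 1 = v (i + 1) := by
    simp only [hw]; rw [if_pos (by omega)]
  have hwlast : w (n - 1) = -v (i - 1) := by
    simp only [hw]
    rw [if_neg (by omega)]
    have : i + (n - 1) - n = i - 1 := by omega
    rw [this]
  have hc1 : fdet (v i) (w 1) = 1 := by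
    rw [hw1]; exact hstep i (by omega)
  have hclast : fdet (v i) (w (n - 1)) = 1 := by
    rw [hwlast, fdet_neg_right, fdet_antisymm, neg_neg]
    have h := hstep (i - 1) (by omega)
    have e : i - 1 + 1 = i := by omega
    rw [e] at h
    exact h
  have hcpos : ∀ j, 1 ≤ j → j ≤ n - 1 → 1 ≤ fdet (v i) (w j) := by
    intro j hj1 hj2
    simp only [hw]
    by_cases hcase : i + j < n
    · rw [if_pos hcase]
      have := hpos i (i + j) (by omega) (by omega)
      omega
    · rw [if_neg hcase, fdet_neg_right, fdet_antisymm]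
      have := hpos (i + j - n) i (by omega) (by omega)
      omega
  have hwstep : ∀ j, j + 1 ≤ n - 1 → fdet (w j) (w (j + 1)) = 1 := by
    intro j hj
    have hidx : i + (j + 1) = i + j + 1 := by omega
    simp only [hw, hidx]
    by_cases h1 : i + j + 1 < n
    · rw [if_pos (by omega), if_pos h1]
      exact hstep (i + j) h1
    · by_cases h2 : i + j < n
      · -- i + j = n - 1
        rw [if_pos h2, if_neg h1, fdet_neg_right]
        have e1 : i + j = n - 1 := by omega
        have e2 : i + j + 1 - n = 0 := by omega
        rw [e2, e1, fdet_antisymm, hclose]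
        ring
      · rw [if_neg h2, if_neg h1, fdet_neg_left, fdet_neg_right, neg_neg]
        have e1 : i + j + 1 - n = (i + j - n) + 1 := by omega
        rw [e1]
        exact hstep (i + j - n) (by omega)
  have hWron : ∀ j, 1 ≤ j → j + 1 ≤ n - 1 →
      fdet (v i) (w j) * fdet (w 1) (w (j + 1))
        - fdet (v i) (w (j + 1)) * fdet (w 1) (w j) = 1 := by
    intro j hj1 hj2
    have hp := fdet_plucker (v i) (w 1) (w j) (w (j + 1))
    rw [hc1, hwstep j hj2, one_mul] at hp
    exact hp
  have hcount := farey_count (n - 1) (fun j => fdet (v i) (w j))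
      (fun j => fdet (w 1) (w j)) (by omega) hcpos hWron hc1 hclast
  simp only [fdet_self, sub_zero] at hcount
  have hLHS : fdet (w 1) (w (n - 1)) = fdet (v (i - 1)) (v (i + 1)) := by
    rw [hw1, hwlast, fdet_neg_right, fdet_antisymm]
    ring
  have hcard : ((Finset.Icc 1 (n - 1)).filter (fun j => fdet (v i) (w j) = 1)).card
      = ((Finset.range n).filter
          (fun j => j ≠ i ∧ (fdet (v i) (v j)).natAbs = 1)).card := by
    apply Finset.card_bij (fun j _ => if i + j < n then i + j else i + j - n)
    · intro j hj
      simp only [Finset.mem_filter, Finset.mem_Icc] at hj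
      obtain ⟨⟨hj1, hj2⟩, hcj⟩ := hj
      simp only [hw] at hcj
      simp only [Finset.mem_filter, Finset.mem_range]
      by_cases hcase : i + j < n
      · rw [if_pos hcase] at hcj ⊢
        refine ⟨hcase, by omega, ?_⟩
        omega
      · rw [if_neg hcase] at hcj ⊢
        rw [fdet_neg_right] at hcj
        refine ⟨by omega, by omega, ?_⟩
        omega
    · intro j1 h1 j2 h2 heq
      simp only [Finset.mem_filter, Finset.mem_Icc] at h1 h2
      split_ifs at heq <;> omega
    · intro k hk
      simp only [Finset.mem_filter, Finset.mem_range] at hk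
      obtain ⟨hkn, hki, hkd⟩ := hk
      by_cases hik : i < k
      · refine ⟨k - i, ?_, ?_⟩
        · simp only [Finset.mem_filter, Finset.mem_Icc, hw]
          rw [if_pos (by omega)]
          have hik2 : i + (k - i) = k := by omega
          rw [hik2]
          have := hpos i k hik hkn
          refine ⟨⟨by omega, by omega⟩, by omega⟩
        · rw [if_pos (by omega)]
          omega
      · have hki' : k < i := by omega
        refine ⟨k + n - i, ?_, ?_⟩
        · simp only [Finset.mem_filter, Finset.mem_Icc, hw]
          rw [if_neg (by omega)]
          have hik2 : i + (k + n - i) - n = k := by omega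
          rw [hik2, fdet_neg_right]
          have := hpos k i hki' (by omega)
          have ha := fdet_antisymm (v k) (v i)
          refine ⟨⟨by omega, by omega⟩, by omega⟩
        · rw [if_neg (by omega)]
          omega
  rw [← hLHS, hcount, hcard]
end

section
/- Solutions of the Hill equation whose coefficients form the quiddity of a Farey n-gon are antiperiodic: let (v_0, …, v_{n−1}) be a Farey n-gon with quiddity (q_0, …, q_{n−1}), extended n-periodically to all integer indices. Then every sequence V : ℤ → ℤ satisfying V_{j+1} = q_{j mod n} · V_j − V_{j−1} for all j ∈ ℤ satisfies V_{j+n} = −V_j for all j ∈ ℤ. -/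
/-- The basic 2-dimensional identity: if `det(a,b) = det(b,c) = 1` then
`a + c = det(a,c) · b`, stated on coordinates. -/
lemma fdet_key (a1 a2 b1 b2 c1 c2 D : ℤ) (hab : a1 * b2 - a2 * b1 = 1)
    (hbc : b1 * c2 - b2 * c1 = 1) (hD : D = a1 * c2 - a2 * c1) :
    c1 + a1 = D * b1 ∧ c2 + a2 = D * b2 := by
  subst hD
  constructor
  · linear_combination (-c1) * hab + (-a1) * hbc
  · linear_combination (-c2) * hab + (-a2) * hbc

/-- The antiperiodic extension of the polygon `v` to all integer indices. -/
noncomputable def ww (n : ℕ) (v : ℕ → ℤ × ℤ) (j : ℤ) : ℤ × ℤ :=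
  (((j / n).negOnePow : ℤ) * (v ((j % n).toNat)).1,
   ((j / n).negOnePow : ℤ) * (v ((j % n).toNat)).2)

lemma ww_eval (n : ℕ) (hn : (0:ℤ) < n) (v : ℕ → ℤ × ℤ) (a k : ℤ) (i : ℕ)
    (h : (i : ℤ) + n * k = a) (h2 : i < n) :
    (ww n v a).1 = ((k.negOnePow : ℤ)) * (v i).1 ∧
    (ww n v a).2 = ((k.negOnePow : ℤ)) * (v i).2 := by
  have hdm : a / (n:ℤ) = k ∧ a % (n:ℤ) = (i:ℤ) :=
    (Int.ediv_emod_unique hn).mpr ⟨h, by positivity, by exact_mod_cast h2⟩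
  unfold ww
  rw [hdm.1, hdm.2]
  simp

lemma negOnePow_pred (k : ℤ) : ((k - 1).negOnePow : ℤ) = -(k.negOnePow : ℤ) := by
  have h := Int.negOnePow_succ (k - 1)
  rw [sub_add_cancel] at h
  rw [h, Units.val_neg, neg_neg]

lemma ww_anti (n : ℕ) (hn : (0:ℤ) < n) (v : ℕ → ℤ × ℤ) (j : ℤ) :
    (ww n v (j + n)).1 = -(ww n v j).1 ∧ (ww n v (j + n)).2 = -(ww n v j).2 := by
  have hdiv : (j + (n:ℤ)) / n = j / n + 1 := by
    simpa using Int.add_mul_ediv_right j 1 hn.ne'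
  have hmod : (j + (n:ℤ)) % n = j % n := by
    simp [Int.add_mul_emod_self_left]
  unfold ww
  rw [hdiv, hmod, Int.negOnePow_succ, Units.val_neg]
  constructor <;> ring

lemma ww_rec (n : ℕ) (hn : 3 ≤ n) (v : ℕ → ℤ × ℤ) (hv : IsFareyPolygon n v)
    (q : ℕ → ℤ)
    (hq : ∀ i, q i = ((fdet (v ((i + n - 1) % n)) (v ((i + 1) % n))).natAbs : ℤ)) (j : ℤ) :
    (ww n v (j + 1)).1 = q ((j % (n : ℤ)).toNat) * (ww n v j).1 - (ww n v (j - 1)).1 ∧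
    (ww n v (j + 1)).2 = q ((j % (n : ℤ)).toNat) * (ww n v j).2 - (ww n v (j - 1)).2 := by
  obtain ⟨-, hpos, hadj, hcyc⟩ := hv
  have hn' : (0:ℤ) < n := by exact_mod_cast (by omega : 0 < n)
  set k := j / (n:ℤ) with hk
  set r := j % (n:ℤ) with hr
  have hjr : j = n * k + r := by rw [hk, hr]; exact (Int.mul_ediv_add_emod j n).symm
  have hr0 : 0 ≤ r := by rw [hr]; exact Int.emod_nonneg j hn'.ne'
  have hrn : r < n := by rw [hr]; exact Int.emod_lt_of_pos j hn'
  unfold fdet at hpos hadj hcyc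
  rcases eq_or_ne r 0 with h0 | h0
  · -- r = 0
    have w0 := ww_eval n hn' v j k 0 (by omega) (by omega)
    have w1 := ww_eval n hn' v (j + 1) k 1 (by omega) (by omega)
    have w2 := ww_eval n hn' v (j - 1) (k - 1) (n - 1) (by have h' : (n:ℤ) * (k - 1) = (n:ℤ) * k - n := (by ring); omega) (by omega)
    have hQ : r.toNat = 0 := by omega
    have hq0 : q 0 = (v 1).1 * (v (n-1)).2 - (v 1).2 * (v (n-1)).1 := by
      have h1 : (0 + n - 1) % n = n - 1 := by
        rw [show 0 + n - 1 = n - 1 by omega]; exact Nat.mod_eq_of_lt (by omega)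
      have h2 : (0 + 1) % n = 1 := Nat.mod_eq_of_lt (by omega)
      have hp : 0 < (v 1).1 * (v (n-1)).2 - (v 1).2 * (v (n-1)).1 :=
        hpos 1 (n-1) (by omega) (by omega)
      rw [hq 0, h1, h2]
      unfold fdet
      rw [show (v (n-1)).1 * (v 1).2 - (v (n-1)).2 * (v 1).1
            = -((v 1).1 * (v (n-1)).2 - (v 1).2 * (v (n-1)).1) by ring,
        Int.natAbs_neg, Int.natAbs_of_nonneg hp.le]
    have h01 := hadj 0 (by omega)
    norm_num at h01
    have key := fdet_key (-(v (n-1)).1) (-(v (n-1)).2) (v 0).1 (v 0).2 (v 1).1 (v 1).2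
      ((v 1).1 * (v (n-1)).2 - (v 1).2 * (v (n-1)).1)
      (by linear_combination hcyc) h01 (by ring)
    rw [w0.1, w0.2, w1.1, w1.2, w2.1, w2.2, hQ, hq0, negOnePow_pred]
    constructor
    · linear_combination ((k.negOnePow : ℤ)) * key.1
    · linear_combination ((k.negOnePow : ℤ)) * key.2
  · rcases eq_or_ne r ((n:ℤ) - 1) with h1 | h1
    · -- r = n - 1
      have w0 := ww_eval n hn' v j k (n - 1) (by omega) (by omega)
      have w1 := ww_eval n hn' v (j + 1) (k + 1) 0 (by have h' : (n:ℤ) * (k + 1) = (n:ℤ) * k + n := (by ring); omega) (by omega)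
      have w2 := ww_eval n hn' v (j - 1) k (n - 2) (by omega) (by omega)
      have hQ : r.toNat = n - 1 := by omega
      have hq1 : q (n-1) = (v 0).1 * (v (n-2)).2 - (v 0).2 * (v (n-2)).1 := by
        have e1 : (n - 1 + n - 1) % n = n - 2 := by
          rw [show n - 1 + n - 1 = (n - 2) + n by omega, Nat.add_mod_right]
          exact Nat.mod_eq_of_lt (by omega)
        have e2 : (n - 1 + 1) % n = 0 := by
          rw [show n - 1 + 1 = n by omega, Nat.mod_self]
        have hp : 0 < (v 0).1 * (v (n-2)).2 - (v 0).2 * (v (n-2)).1 :=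
          hpos 0 (n-2) (by omega) (by omega)
        rw [hq (n-1), e1, e2]
        unfold fdet
        rw [show (v (n-2)).1 * (v 0).2 - (v (n-2)).2 * (v 0).1
              = -((v 0).1 * (v (n-2)).2 - (v 0).2 * (v (n-2)).1) by ring,
          Int.natAbs_neg, Int.natAbs_of_nonneg hp.le]
      have hab := hadj (n-2) (by omega)
      rw [show n - 2 + 1 = n - 1 by omega] at hab
      have key := fdet_key (v (n-2)).1 (v (n-2)).2 (v (n-1)).1 (v (n-1)).2
        (-(v 0).1) (-(v 0).2)
        ((v 0).1 * (v (n-2)).2 - (v 0).2 * (v (n-2)).1)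
        hab (by linear_combination hcyc) (by ring)
      rw [w0.1, w0.2, w1.1, w1.2, w2.1, w2.2, hQ, hq1, Int.negOnePow_succ, Units.val_neg]
      constructor
      · linear_combination ((k.negOnePow : ℤ)) * key.1
      · linear_combination ((k.negOnePow : ℤ)) * key.2
    · -- 1 ≤ r ≤ n - 2
      set i := r.toNat with hi
      have hir : (i : ℤ) = r := Int.toNat_of_nonneg hr0
      have hi1 : 1 ≤ i := by omega
      have hi2 : i + 1 ≤ n - 1 := by omega
      have w0 := ww_eval n hn' v j k i (by omega) (by omega)
      have w1 := ww_eval n hn' v (j + 1) k (i + 1) (by omega) (by omega)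
      have w2 := ww_eval n hn' v (j - 1) k (i - 1) (by omega) (by omega)
      have hqi : q i = (v (i-1)).1 * (v (i+1)).2 - (v (i-1)).2 * (v (i+1)).1 := by
        have e1 : (i + n - 1) % n = i - 1 := by
          rw [show i + n - 1 = (i - 1) + n by omega, Nat.add_mod_right]
          exact Nat.mod_eq_of_lt (by omega)
        have e2 : (i + 1) % n = i + 1 := Nat.mod_eq_of_lt (by omega)
        have hp : 0 < (v (i-1)).1 * (v (i+1)).2 - (v (i-1)).2 * (v (i+1)).1 :=
          hpos (i-1) (i+1) (by omega) (by omega)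
        rw [hq i, e1, e2]
        unfold fdet
        rw [Int.natAbs_of_nonneg hp.le]
      have hab := hadj (i-1) (by omega)
      rw [show i - 1 + 1 = i by omega] at hab
      have hbc := hadj i (by omega)
      have key := fdet_key (v (i-1)).1 (v (i-1)).2 (v i).1 (v i).2
        (v (i+1)).1 (v (i+1)).2
        ((v (i-1)).1 * (v (i+1)).2 - (v (i-1)).2 * (v (i+1)).1)
        hab hbc (by ring)
      rw [w0.1, w0.2, w1.1, w1.2, w2.1, w2.2, hqi]
      constructor
      · linear_combination ((k.negOnePow : ℤ)) * key.1
      · linear_combination ((k.negOnePow : ℤ)) * key.2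

/-- Solutions of the Hill equation whose coefficients form the quiddity
`q i = |det(v_{(i-1) mod n}, v_{(i+1) mod n})|` (extended `n`-periodically)
of a Farey `n`-gon are `n`-antiperiodic. -/
theorem stmt7 (n : ℕ) (hn : 3 ≤ n) (v : ℕ → ℤ × ℤ) (hv : IsFareyPolygon n v)
    (q : ℕ → ℤ)
    (hq : ∀ i, q i = ((fdet (v ((i + n - 1) % n)) (v ((i + 1) % n))).natAbs : ℤ))
    (V : ℤ → ℤ)
    (hV : ∀ j : ℤ, V (j + 1) = q ((j % (n : ℤ)).toNat) * V j - V (j - 1)) :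
    ∀ j : ℤ, V (j + (n : ℤ)) = -V j := by
  have hn' : (0:ℤ) < n := by exact_mod_cast (by omega : 0 < n)
  set a := (ww n v 0).1 * V 1 - (ww n v 1).1 * V 0 with ha
  set b := (ww n v 0).2 * V 1 - (ww n v 1).2 * V 0 with hb
  have main : ∀ j : ℤ, V j = a * (ww n v j).2 - b * (ww n v j).1 ∧
      V (j + 1) = a * (ww n v (j + 1)).2 - b * (ww n v (j + 1)).1 := by
    intro j
    induction j using Int.induction_on with
    | zero =>
      simp only [show ((0:ℤ) + 1) = 1 from by norm_num]
      have w0 := ww_eval n hn' v 0 0 0 (by norm_num) (by omega)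
      have w1' := ww_eval n hn' v 1 0 1 (by norm_num) (by omega)
      have h01 := hv.2.2.1 0 (by omega)
      norm_num [fdet] at h01
      rw [ha, hb, w0.1, w0.2, w1'.1, w1'.2]
      simp only [Int.negOnePow_zero, Units.val_one, one_mul]
      exact ⟨by linear_combination (-(V 0)) * h01, by linear_combination (-(V 1)) * h01⟩
    | succ i ih =>
      refine ⟨ih.2, ?_⟩
      have h1 := hV ((i : ℤ) + 1)
      have h2 := ww_rec n hn v hv q hq ((i : ℤ) + 1)
      rw [show (i : ℤ) + 1 - 1 = i by ring] at h1 h2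
      set Q := q ((((i : ℤ) + 1) % (n : ℤ)).toNat)
      linear_combination h1 + Q * ih.2 - ih.1 - a * h2.2 + b * h2.1
    | pred i ih =>
      have h1 := hV (-(i : ℤ))
      have h2 := ww_rec n hn v hv q hq (-(i : ℤ))
      have e : -(i : ℤ) - 1 + 1 = -(i : ℤ) := by ring
      rw [e]
      refine ⟨?_, ih.1⟩
      set Q := q (((-(i : ℤ)) % (n : ℤ)).toNat)
      linear_combination h1 + Q * ih.1 - ih.2 - a * h2.2 + b * h2.1
  intro j
  have h1 := (main j).1
  have h2 := (main (j + n)).1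
  have h3 := ww_anti n hn' v j
  rw [h3.1, h3.2] at h2
  linear_combination h2 + h1
end

section
/- Non-oscillation of quiddity Hill equations: let (v_0, …, v_{n−1}) be a Farey n-gon with quiddity (q_0, …, q_{n−1}), extended n-periodically. If V : ℤ → ℤ satisfies V_{j+1} = q_{j mod n} · V_j − V_{j−1} for all j ∈ ℤ, and V_{−1} < 0 and V_0 > 0, then V_j > 0 for all 0 ≤ j ≤ n−1. -/
/-- Plücker-type identity: if `det(a,b) = det(b,c) = 1` then
`det(c,w) = det(a,c) det(b,w) - det(a,w)` for every `w`. -/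
lemma fkey (a b c w : ℤ × ℤ) (h1 : fdet a b = 1) (h2 : fdet b c = 1) :
    fdet c w = fdet a c * fdet b w - fdet a w := by
  simp only [fdet] at *
  linear_combination (-(c.1 * w.2 - c.2 * w.1)) * h1 + (-(a.1 * w.2 - a.2 * w.1)) * h2

/-- Mirror version of `fkey`. -/
lemma fkey' (a b c w : ℤ × ℤ) (h1 : fdet a b = 1) (h2 : fdet b c = 1) :
    fdet w c = fdet a c * fdet w b - fdet w a := by
  have h := fkey a b c w h1 h2
  simp only [fdet] at *
  linarith

/-- Solutions of the Hill equation whose coefficients form the quiddity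
`q i = |det(v_{(i-1) mod n}, v_{(i+1) mod n})|` (extended `n`-periodically)
of a Farey `n`-gon with `V (-1) < 0` and `V 0 > 0` are positive on `0, …, n-1` (non-oscillation). -/
theorem stmt8 (n : ℕ) (hn : 3 ≤ n) (v : ℕ → ℤ × ℤ) (hv : IsFareyPolygon n v)
    (q : ℕ → ℤ)
    (hq : ∀ i, q i = ((fdet (v ((i + n - 1) % n)) (v ((i + 1) % n))).natAbs : ℤ))
    (V : ℤ → ℤ)
    (hV : ∀ j : ℤ, V (j + 1) = q ((j % (n : ℤ)).toNat) * V j - V (j - 1))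
    (hneg : V (-1) < 0) (hpos : 0 < V 0) :
    ∀ j : ℤ, 0 ≤ j → j ≤ (n : ℤ) - 1 → 0 < V j := by
  obtain ⟨hprim, hposdet, hcons, hlast⟩ := hv
  -- value of q 0
  have hq0 : q 0 = fdet (v 1) (v (n - 1)) := by
    have e1 : (0 + n - 1) % n = n - 1 := by
      rw [show 0 + n - 1 = n - 1 by omega, Nat.mod_eq_of_lt (by omega)]
    have e2 : (0 + 1) % n = 1 := Nat.mod_eq_of_lt (by omega)
    have hd : 0 < fdet (v 1) (v (n - 1)) := hposdet 1 (n - 1) (by omega) (by omega)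
    have hanti : fdet (v (n - 1)) (v 1) = -(fdet (v 1) (v (n - 1))) := by
      simp only [fdet]; ring
    rw [hq 0, e1, e2, hanti]
    omega
  -- value of q i for interior i
  have hqi : ∀ i : ℕ, 1 ≤ i → i + 1 < n → q i = fdet (v (i - 1)) (v (i + 1)) := by
    intro i h1 h2
    have e1 : (i + n - 1) % n = i - 1 := by
      have : i + n - 1 = (i - 1) + n := by omega
      rw [this, Nat.add_mod_right, Nat.mod_eq_of_lt (by omega)]
    have e2 : (i + 1) % n = i + 1 := Nat.mod_eq_of_lt h2
    have hd : 0 < fdet (v (i - 1)) (v (i + 1)) := hposdet (i - 1) (i + 1) (by omega) h2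
    rw [hq i, e1, e2]
    omega
  -- recurrence rewritten at natural indices
  have hrec : ∀ k : ℕ, k < n → V ((k : ℤ) + 1) = q k * V k - V ((k : ℤ) - 1) := by
    intro k hk
    have e : (((k : ℤ)) % (n : ℤ)).toNat = k := by
      rw [Int.emod_eq_of_lt (by positivity) (by exact_mod_cast hk)]
      exact Int.toNat_natCast k
    have := hV (k : ℤ)
    rw [e] at this
    exact this
  -- the closed formula
  have main : ∀ k : ℕ, k ≤ n - 1 →
      V k = V 0 * fdet (v k) (v (n - 1)) - V (-1) * fdet (v 0) (v k) := by
    intro k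
    induction k using Nat.twoStepInduction with
    | zero =>
      intro _
      have : fdet (v 0) (v 0) = 0 := by simp only [fdet]; ring
      rw [this, hlast]
      push_cast
      ring
    | one =>
      intro _
      have h01 : fdet (v 0) (v 1) = 1 := hcons 0 (by omega)
      have hr := hrec 0 (by omega)
      push_cast at hr ⊢
      rw [hr, hq0, h01]
      ring
    | more k ih1 ih2 =>
      intro hk2
      have hk : k ≤ n - 1 := by omega
      have hk1 : k + 1 ≤ n - 1 := by omega
      have hab : fdet (v k) (v (k + 1)) = 1 := hcons k (by omega)
      have hbc : fdet (v (k + 1)) (v (k + 2)) = 1 := by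
        have := hcons (k + 1) (by omega)
        simpa using this
      have hqv : q (k + 1) = fdet (v k) (v (k + 2)) := by
        have := hqi (k + 1) (by omega) (by omega)
        simpa using this
      have hr := hrec (k + 1) (by omega)
      have e1 : ((k : ℤ) + 1 + 1) = ((k + 2 : ℕ) : ℤ) := by push_cast; ring
      have e2 : ((k : ℤ) + 1 - 1) = (k : ℤ) := by ring
      push_cast at hr
      rw [show ((k : ℤ) + 1 + 1) = ((k : ℤ) + 2) by ring,
        show ((k : ℤ) + 1 - 1) = (k : ℤ) by ring] at hr
      have key1 := fkey (v k) (v (k + 1)) (v (k + 2)) (v (n - 1)) hab hbc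
      have key2 := fkey' (v k) (v (k + 1)) (v (k + 2)) (v 0) hab hbc
      push_cast at ih1 ih2 ⊢
      rw [hr, ih1 hk, ih2 hk1, hqv, key1, key2]
      ring
  -- conclude positivity
  intro j hj0 hj1
  obtain ⟨k, rfl⟩ : ∃ k : ℕ, j = (k : ℤ) := ⟨j.toNat, (Int.toNat_of_nonneg hj0).symm⟩
  have hk : k ≤ n - 1 := by omega
  rcases Nat.eq_zero_or_pos k with rfl | hkpos
  · exact_mod_cast hpos
  · have hB : 0 < fdet (v 0) (v k) := hposdet 0 k hkpos (by omega)
    have hA : 0 ≤ fdet (v k) (v (n - 1)) := by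
      rcases eq_or_lt_of_le hk with rfl | hlt
      · simp [fdet, mul_comm]
      · exact le_of_lt (hposdet k (n - 1) hlt (by omega))
    have hm := main k hk
    have t1 : 0 ≤ V 0 * fdet (v k) (v (n - 1)) := mul_nonneg hpos.le hA
    have t2 : 0 < (-V (-1)) * fdet (v 0) (v k) := mul_pos (by linarith) hB
    rw [hm]
    nlinarith
end

section
/- An (n,m)-antiperiodic SL2-tiling that contains a positive m×n fundamental rectangle is tame: if n, m ≥ 1 and a : ℤ×ℤ → ℤ is an (n,m)-antiperiodic SL2-tiling with a positive fundamental rectangle, then every adjacent 3×3 minor of a vanishes. -/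
/-- An SL2-tiling: every adjacent 2×2 minor equals 1. -/
def IsSL2Tiling (a : ℤ → ℤ → ℤ) : Prop :=
  ∀ i j : ℤ, a i j * a (i + 1) (j + 1) - a i (j + 1) * a (i + 1) j = 1

/-- An `(n,m)`-antiperiodic array: rows are `n`-antiperiodic, columns `m`-antiperiodic. -/
def IsAntiperiodic (n m : ℕ) (a : ℤ → ℤ → ℤ) : Prop :=
  ∀ i j : ℤ, a i (j + (n : ℤ)) = -a i j ∧ a (i + (m : ℤ)) j = -a i j

/-- A positive `m × n` fundamental rectangle: `a i j > 0` for `0 ≤ i ≤ m-1`, `0 ≤ j ≤ n-1`. -/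
def HasPosRect (n m : ℕ) (a : ℤ → ℤ → ℤ) : Prop :=
  ∀ i j : ℤ, 0 ≤ i → i ≤ (m : ℤ) - 1 → 0 ≤ j → j ≤ (n : ℤ) - 1 → 0 < a i j

/-- Tameness: every adjacent 3×3 minor vanishes. -/
def IsTame (a : ℤ → ℤ → ℤ) : Prop :=
  ∀ i j : ℤ,
    (Matrix.of fun k l : Fin 3 => a (i + (k.val : ℤ)) (j + (l.val : ℤ))).det = 0

/-- A periodic function on ℤ is determined by its values on residues. -/
lemma periodic_emod (c : ℤ) (hc : 0 < c) (g : ℤ → ℤ) (hg : ∀ x, g (x + c) = g x) :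
    ∀ x, g x = g (x % c) := by
  have key : ∀ k : ℤ, ∀ x, g (x + k * c) = g x := by
    intro k
    induction k using Int.induction_on with
    | zero => intro x; simp
    | succ k ih =>
        intro x
        have : x + (k + 1 : ℤ) * c = (x + k * c) + c := by ring
        rw [this, hg, ih]
    | pred k ih =>
        intro x
        have : x + (-(k : ℤ) - 1) * c + c = x + (-(k : ℤ)) * c := by ring
        have h2 := hg (x + (-(k : ℤ) - 1) * c)
        rw [this] at h2
        rw [← h2, ih]
  intro x
  have : x % c = x + (-(x / c)) * c := by
    rw [Int.emod_def]; ring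
  rw [this, key]

/-- An `(n,m)`-antiperiodic SL2-tiling containing a positive `m × n` fundamental
rectangle is tame. -/
theorem stmt9 (n m : ℕ) (hn : 1 ≤ n) (hm : 1 ≤ m) (a : ℤ → ℤ → ℤ)
    (hSL : IsSL2Tiling a) (hAp : IsAntiperiodic n m a) (hPos : HasPosRect n m a) :
    IsTame a := by
  have hmpos : (0:ℤ) < (m:ℤ) := by exact_mod_cast hm
  have hnpos : (0:ℤ) < (n:ℤ) := by exact_mod_cast hn
  -- every entry is nonzero
  have hne : ∀ i j : ℤ, a i j ≠ 0 := by
    intro i j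
    have hrow : ∀ x, (a x j)^2 = (a (x % (m:ℤ)) j)^2 := by
      apply periodic_emod (m:ℤ) hmpos (fun x => (a x j)^2)
      intro x
      have := (hAp x j).2
      simp only [this]; ring
    have hcol : ∀ y, (a (i % (m:ℤ)) y)^2 = (a (i % (m:ℤ)) (y % (n:ℤ)))^2 := by
      apply periodic_emod (n:ℤ) hnpos (fun y => (a (i % (m:ℤ)) y)^2)
      intro y
      have := (hAp (i % (m:ℤ)) y).1
      simp only [this]; ring
    have hsq : (a i j)^2 = (a (i % (m:ℤ)) (j % (n:ℤ)))^2 := by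
      rw [hrow i, hcol j]
    have hpos : 0 < a (i % (m:ℤ)) (j % (n:ℤ)) := by
      apply hPos
      · exact Int.emod_nonneg i (ne_of_gt hmpos)
      · linarith [Int.emod_lt_of_pos i hmpos]
      · exact Int.emod_nonneg j (ne_of_gt hnpos)
      · linarith [Int.emod_lt_of_pos j hnpos]
    intro h0
    rw [h0] at hsq
    nlinarith
  intro i j
  have h1 := hSL i j
  have h2 := hSL i (j + 1)
  have h3 := hSL (i + 1) j
  have h4 := hSL (i + 1) (j + 1)
  have hc := hne (i + 1) (j + 1)
  rw [Matrix.det_fin_three]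
  simp only [Matrix.of_apply, Fin.val_zero, Fin.val_one, Fin.val_two]
  push_cast
  simp only [add_zero]
  rw [show i+(1:ℤ)+1 = i+2 from by ring] at h3 h4
  rw [show j+(1:ℤ)+1 = j+2 from by ring] at h2 h4
  have key : a (i+1) (j+1) *
      (a i j * a (i+1) (j+1) * a (i+2) (j+2) -
       a i j * a (i+1) (j+2) * a (i+2) (j+1) -
       a i (j+1) * a (i+1) j * a (i+2) (j+2) +
       a i (j+1) * a (i+1) (j+2) * a (i+2) j +
       a i (j+2) * a (i+1) j * a (i+2) (j+1) -
       a i (j+2) * a (i+1) (j+1) * a (i+2) j) = 0 := by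
    linear_combination (a (i+1) (j+1) * a (i+2) (j+2) - a (i+1) (j+2) * a (i+2) (j+1)) * h1
      + h4 - (a (i+1) j * a (i+2) (j+1) - a (i+1) (j+1) * a (i+2) j) * h2 - h3
  have := mul_eq_zero.mp key
  rcases this with h | h
  · exact absurd h hc
  · linear_combination h
end

section
/- The set S of totally positive unimodular matrices is a semigroup: the set S of matrices [[a,b],[c,d]] in SL₂(ℤ) with 0 < a < b < d and 0 < a < c < d is closed under matrix multiplication. -/
/-- Membership in the semigroup `S ⊂ SL₂(ℤ)` of totally positive unimodular matrices:
`0 < a < b < d` and `0 < a < c < d` for `M = [[a,b],[c,d]]`. -/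
def InS (M : Matrix.SpecialLinearGroup (Fin 2) ℤ) : Prop :=
  0 < M.1 0 0 ∧ M.1 0 0 < M.1 0 1 ∧ M.1 0 1 < M.1 1 1 ∧
  M.1 0 0 < M.1 1 0 ∧ M.1 1 0 < M.1 1 1

/-- The set `S` of totally positive matrices in `SL₂(ℤ)` is a semigroup:
it is closed under matrix multiplication. -/
theorem stmt10 (M N : Matrix.SpecialLinearGroup (Fin 2) ℤ)
    (hM : InS M) (hN : InS N) : InS (M * N) := by
  obtain ⟨h1, h2, h3, h4, h5⟩ := hM
  obtain ⟨g1, g2, g3, g4, g5⟩ := hN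
  have hmul : (M * N).1 = M.1 * N.1 := rfl
  refine ⟨?_, ?_, ?_, ?_, ?_⟩ <;>
    simp only [hmul, Matrix.mul_apply, Fin.sum_univ_two] <;>
    nlinarith [mul_pos h1 g1, mul_pos (h1.trans h2) (g1.trans g4)]
end

section
/- The first two rows of an antiperiodic positive SL2-tiling form a Farey polygon: let n ≥ 3, m ≥ 2, and let a : ℤ×ℤ → ℤ be an (n,m)-antiperiodic SL2-tiling with positive fundamental rectangle. Then the vectors u_j = (a(0,j), a(1,j)) for j = 0, …, n−1 form a Farey n-gon: each u_j is primitive, det(u_i, u_j) > 0 for all 0 ≤ i < j ≤ n−1, det(u_j, u_{j+1}) = 1 for 0 ≤ j ≤ n−2, and det(u_0, u_{n−1}) = 1. -/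
/-- Transitivity of positive determinants for vectors with positive first coordinate. -/
lemma fdet_trans (u v w : ℤ × ℤ) (hu : 0 < u.1) (hv : 0 < v.1) (hw : 0 < w.1)
    (h1 : 0 < fdet u v) (h2 : 0 < fdet v w) : 0 < fdet u w := by
  have hid : fdet u w * v.1 = fdet u v * w.1 + fdet v w * u.1 := by
    simp only [fdet]; ring
  nlinarith [mul_pos h1 hw, mul_pos h2 hu]

/-- The first two rows of an `(n,m)`-antiperiodic SL2-tiling with positive fundamental
rectangle form a Farey `n`-gon via `u j = (a 0 j, a 1 j)`. -/
theorem stmt13 (n m : ℕ) (hn : 3 ≤ n) (hm : 2 ≤ m) (a : ℤ → ℤ → ℤ)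
    (hSL : IsSL2Tiling a) (hAp : IsAntiperiodic n m a) (hPos : HasPosRect n m a) :
    IsFareyPolygon n (fun j : ℕ => (a 0 (j : ℤ), a 1 (j : ℤ))) := by
  have hm2 : (2 : ℤ) ≤ (m : ℤ) := by exact_mod_cast hm
  -- determinant of consecutive columns
  have hd : ∀ j : ℤ, a 0 j * a 1 (j + 1) - a 0 (j + 1) * a 1 j = 1 := by
    intro j
    have := hSL 0 j
    norm_num at this
    linarith
  -- positivity of rows 0 and 1 on the fundamental rectangle
  have hpos0 : ∀ j : ℤ, 0 ≤ j → j ≤ (n : ℤ) - 1 → 0 < a 0 j := fun j hj hj' =>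
    hPos 0 j le_rfl (by linarith) hj hj'
  have hpos1 : ∀ j : ℤ, 0 ≤ j → j ≤ (n : ℤ) - 1 → 0 < a 1 j := fun j hj hj' =>
    hPos 1 j (by norm_num) (by linarith) hj hj'
  have hjb : ∀ j : ℕ, j < n → (0 ≤ (j : ℤ) ∧ (j : ℤ) ≤ (n : ℤ) - 1) := by
    intro j hj; constructor <;> [positivity; omega]
  refine ⟨?_, ?_, ?_, ?_⟩
  · -- primitivity
    intro j hj
    obtain ⟨hj0, hj1⟩ := hjb j hj
    have h1 := hpos1 j hj0 hj1
    refine ⟨?_, le_of_lt h1, fun h => absurd h (by simp; omega)⟩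
    · rw [← Int.isCoprime_iff_gcd_eq_one]
      exact ⟨a 1 ((j : ℤ) + 1), -(a 0 ((j : ℤ) + 1)), by linear_combination hd (j : ℤ)⟩
  · -- positivity of all determinants
    have key : ∀ j : ℕ, j < n → ∀ i : ℕ, i < j →
        0 < fdet (a 0 (i : ℤ), a 1 (i : ℤ)) (a 0 (j : ℤ), a 1 (j : ℤ)) := by
      intro j
      induction j with
      | zero => omega
      | succ k ih =>
        intro hkn i hik
        have hcons : fdet (a 0 (k : ℤ), a 1 (k : ℤ)) (a 0 ((k + 1 : ℕ) : ℤ), a 1 ((k + 1 : ℕ) : ℤ)) = 1 := by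
          simp only [fdet]
          push_cast
          linear_combination hd (k : ℤ)
        rcases Nat.lt_succ_iff_lt_or_eq.mp hik with h | h
        · have h1 := ih (by omega) i h
          obtain ⟨hi0, hi1⟩ := hjb i (by omega)
          obtain ⟨hk0, hk1⟩ := hjb k (by omega)
          obtain ⟨hk0', hk1'⟩ := hjb (k + 1) hkn
          exact fdet_trans _ _ _ (hpos0 _ hi0 hi1) (hpos0 _ hk0 hk1)
            (hpos0 _ hk0' hk1') h1 (by rw [hcons]; norm_num)
        · subst h; rw [hcons]; norm_num
    intro i j hij hjn
    exact key j hjn i hij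
  · -- consecutive determinants
    intro i hi
    simp only [fdet]
    push_cast
    linear_combination hd (i : ℤ)
  · -- closing determinant
    have hcast : ((n - 1 : ℕ) : ℤ) = (n : ℤ) - 1 := by omega
    have h1 := hd ((n : ℤ) - 1)
    have e0 : a 0 ((n : ℤ) - 1 + 1) = -a 0 0 := by
      have h := (hAp 0 0).1
      rw [show (n : ℤ) - 1 + 1 = 0 + (n : ℤ) by ring, h]
    have e1 : a 1 ((n : ℤ) - 1 + 1) = -a 1 0 := by
      have h := (hAp 1 0).1
      rw [show (n : ℤ) - 1 + 1 = 0 + (n : ℤ) by ring, h]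
    simp only [fdet, hcast]
    rw [e0, e1] at h1
    push_cast
    linarith
end

section
/- Well-definedness of the double recurrence generating SL2-tilings: for any sequences q, q' : ℤ → ℤ and any integers α, β, γ, δ, there exists a unique map T : ℤ×ℤ → ℤ such that T(0,0) = α, T(0,1) = β, T(1,0) = γ, T(1,1) = δ, and for all (i,j) ∈ ℤ²: T(i,j+1) = q(j)·T(i,j) − T(i,j−1) and T(i+1,j) = q'(i)·T(i,j) − T(i−1,j) (the two recurrences commute). -/
section Seq

variable {M : Type*} [AddCommGroup M] (q : ℤ → ℤ) (a b : M)

def fwdAux : ℕ → M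
  | 0 => a
  | 1 => b
  | (n+2) => q (n+1) • fwdAux (n+1) - fwdAux n

def bwdAux : ℕ → M
  | 0 => a
  | 1 => q 0 • a - b
  | (n+2) => q (-(n+1)) • bwdAux (n+1) - bwdAux n

def seqF : ℤ → M
  | Int.ofNat n => fwdAux q a b n
  | Int.negSucc n => bwdAux q a b (n+1)

lemma seqF_zero : seqF q a b 0 = a := rfl
lemma seqF_one : seqF q a b 1 = b := rfl

lemma seqF_rec : ∀ j : ℤ, seqF q a b (j+1) = q j • seqF q a b j - seqF q a b (j-1) := by
  intro j
  match j with
  | Int.ofNat 0 =>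
      show seqF q a b 1 = q 0 • seqF q a b 0 - seqF q a b (-1)
      show b = q 0 • a - bwdAux q a b 1
      show b = q 0 • a - (q 0 • a - b)
      abel
  | Int.ofNat (n+1) =>
      show seqF q a b ((n+1:ℕ)+1) = q (n+1:ℕ) • seqF q a b (n+1:ℕ) - seqF q a b ((n+1:ℕ)-1)
      have h1 : ((n+1:ℕ):ℤ) + 1 = Int.ofNat (n+2) := by simp; ring
      have h2 : ((n+1:ℕ):ℤ) - 1 = Int.ofNat n := by simp
      rw [h1, h2]
      show fwdAux q a b (n+2) = q (n+1:ℕ) • fwdAux q a b (n+1) - fwdAux q a b n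
      rw [fwdAux]
      norm_num
  | Int.negSucc n =>
      have h1 : Int.negSucc n + 1 = -(n:ℤ) := by rw [Int.negSucc_eq]; ring
      have h2 : Int.negSucc n - 1 = Int.negSucc (n+1) := by rw [Int.negSucc_eq, Int.negSucc_eq]; push_cast; ring
      rw [h1, h2]
      have hb : seqF q a b (Int.negSucc (n+1)) = bwdAux q a b (n+2) := rfl
      have hn : seqF q a b (-(n:ℤ)) = bwdAux q a b n := by
        cases n with
        | zero => rfl
        | succ m =>
            have : (-(((m:ℕ)+1:ℕ)):ℤ) = Int.negSucc m := by rw [Int.negSucc_eq]; push_cast; ring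
            rw [this]; rfl
      have hm : seqF q a b (Int.negSucc n) = bwdAux q a b (n+1) := rfl
      rw [hb, hn, hm, bwdAux]
      have : (-((n:ℤ)+1)) = Int.negSucc n := by rw [Int.negSucc_eq]
      rw [this]
      abel

lemma seqF_unique (f : ℤ → M) (h0 : f 0 = a) (h1 : f 1 = b)
    (hrec : ∀ j : ℤ, f (j+1) = q j • f j - f (j-1)) : f = seqF q a b := by
  have hfwd : ∀ n : ℕ, f n = fwdAux q a b n ∧ f (n+1:ℕ) = fwdAux q a b (n+1) := by
    intro n
    induction n with
    | zero => exact ⟨h0, h1⟩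
    | succ m ih =>
        refine ⟨ih.2, ?_⟩
        have := hrec ((m:ℤ)+1)
        have e1 : ((m:ℤ)+1+1) = ((m+2:ℕ):ℤ) := by push_cast; ring
        have e2 : ((m:ℤ)+1-1) = (m:ℕ) := by ring
        rw [e1, e2] at this
        have e3 : ((m:ℤ)+1) = ((m+1:ℕ):ℤ) := by push_cast; ring
        rw [e3] at this
        rw [this, ih.1, ih.2, fwdAux]
        push_cast
        ring_nf
  have hbwd : ∀ n : ℕ, f (-(n:ℤ)) = bwdAux q a b n ∧ f (-((n:ℤ)+1)) = bwdAux q a b (n+1) := by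
    intro n
    induction n with
    | zero =>
        constructor
        · simpa [bwdAux] using h0
        · have h := hrec 0
          norm_num at h
          rw [h0, h1] at h
          have h2 : f (-1) = q 0 • a - b := by rw [h]; abel
          have e : (-(((0:ℕ):ℤ)+1)) = -1 := by norm_num
          rw [e, h2]; rfl
    | succ m ih =>
        refine ⟨by push_cast; exact ih.2, ?_⟩
        have := hrec (-((m:ℤ)+1))
        have e1 : (-((m:ℤ)+1)+1) = -(m:ℤ) := by ring
        rw [e1, ih.2, ih.1] at this
        have hkey : f (-((m:ℤ)+1) - 1) = q (-((m:ℤ)+1)) • bwdAux q a b (m+1) - bwdAux q a b m := by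
          rw [eq_sub_iff_add_eq, add_comm, ← eq_sub_iff_add_eq] at this
          exact this
        have e2 : (-((m:ℤ)+1) - 1) = -(((m+1:ℕ):ℤ)+1) := by push_cast; ring
        rw [e2] at hkey
        rw [hkey, bwdAux]
  funext j
  match j with
  | Int.ofNat n => exact (hfwd n).1
  | Int.negSucc n =>
      have : (Int.negSucc n) = -(((n:ℕ):ℤ)+1) := by rw [Int.negSucc_eq]
      rw [this]
      exact (hbwd n).2

end Seq

def rowMod (q : ℤ → ℤ) : Submodule ℤ (ℤ → ℤ) where
  carrier := {f | ∀ j : ℤ, f (j+1) = q j * f j - f (j-1)}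
  zero_mem' := by intro j; simp
  add_mem' := by
    intro f g hf hg j
    simp only [Pi.add_apply, hf j, hg j]
    ring
  smul_mem' := by
    intro c f hf j
    simp only [Pi.smul_apply, smul_eq_mul, hf j]
    ring

/-- Well-definedness of the double recurrence generating SL2-tilings: for any
coefficient sequences `q, q' : ℤ → ℤ` and any initial `2×2` block `α, β, γ, δ`,
there is a unique doubly-indexed array `T : ℤ×ℤ → ℤ` with these initial values
satisfying the row recurrence `T i (j+1) = q j · T i j − T i (j-1)` and the column
recurrence `T (i+1) j = q' i · T i j − T (i-1) j`. -/
theorem stmt16 (q q' : ℤ → ℤ) (α β γ δ : ℤ) :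
    ∃! T : ℤ → ℤ → ℤ,
      T 0 0 = α ∧ T 0 1 = β ∧ T 1 0 = γ ∧ T 1 1 = δ ∧
      (∀ i j : ℤ, T i (j + 1) = q j * T i j - T i (j - 1)) ∧
      (∀ i j : ℤ, T (i + 1) j = q' i * T i j - T (i - 1) j) := by
  -- rows 0 and 1
  set R0 : ℤ → ℤ := seqF q α β with hR0
  set R1 : ℤ → ℤ := seqF q γ δ with hR1
  have hR0mem : R0 ∈ rowMod q := by
    intro j; have := seqF_rec q α β j; simpa [smul_eq_mul] using this
  have hR1mem : R1 ∈ rowMod q := by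
    intro j; have := seqF_rec q γ δ j; simpa [smul_eq_mul] using this
  set F : ℤ → rowMod q := seqF q' ⟨R0, hR0mem⟩ ⟨R1, hR1mem⟩ with hF
  refine ⟨fun i j => (F i : ℤ → ℤ) j, ⟨?_, ?_, ?_, ?_, ?_, ?_⟩, ?_⟩
  · show (F 0 : ℤ → ℤ) 0 = α
    rw [hF, seqF_zero]; rfl
  · show (F 0 : ℤ → ℤ) 1 = β
    rw [hF, seqF_zero]; rfl
  · show (F 1 : ℤ → ℤ) 0 = γ
    rw [hF, seqF_one]; rfl
  · show (F 1 : ℤ → ℤ) 1 = δ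
    rw [hF, seqF_one]; rfl
  · intro i j
    exact (F i).2 j
  · intro i j
    have := seqF_rec q' (⟨R0, hR0mem⟩ : rowMod q) (⟨R1, hR1mem⟩ : rowMod q) i
    rw [← hF] at this
    have := congrArg (fun f : rowMod q => (f : ℤ → ℤ) j) this
    simpa [smul_eq_mul] using this
  · rintro T ⟨h00, h01, h10, h11, hrow, hcol⟩
    have hmem : ∀ i : ℤ, T i ∈ rowMod q := fun i j => hrow i j
    set F' : ℤ → rowMod q := fun i => ⟨T i, hmem i⟩ with hF'
    have hT0 : T 0 = R0 := by
      refine seqF_unique q α β (T 0) h00 h01 ?_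
      intro j; simpa [smul_eq_mul] using hrow 0 j
    have hT1 : T 1 = R1 := by
      refine seqF_unique q γ δ (T 1) h10 h11 ?_
      intro j; simpa [smul_eq_mul] using hrow 1 j
    have hu : F' = F := by
      rw [hF]
      refine seqF_unique q' _ _ F' ?_ ?_ ?_
      · exact Subtype.ext hT0
      · exact Subtype.ext hT1
      · intro i
        refine Subtype.ext ?_
        funext j
        have := hcol i j
        simpa [smul_eq_mul, hF'] using this
    funext i j
    have := congrArg (fun G : ℤ → rowMod q => (G i : ℤ → ℤ) j) hu
    simpa using this
end

section
/- Entries of an antiperiodic positive SL2-tiling are Farey distances between the vertices of two Farey polygons: let n, m ≥ 3 and let a : ℤ×ℤ → ℤ be an (n,m)-antiperiodic SL2-tiling with positive fundamental rectangle. Then there exist a Farey n-gon (u_0, …, u_{n−1}) and a Farey m-gon (w_0, …, w_{m−1}) with w_0 = (1,0) and w_{m−1} = (0,1), such that a(i,j) = |det(w_{(i−1) mod m}, u_j)| for all 0 ≤ i ≤ m−1 and 0 ≤ j ≤ n−1. -/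
lemma coprime_of_comb {x y p q : ℤ} (h : p * x + q * y = 1) : Int.gcd x y = 1 :=
  Int.isCoprime_iff_gcd_eq_one.mp ⟨p, q, h⟩

lemma fdet_trans_s18 {u v w : ℤ × ℤ} (hv1 : 0 < v.1) (hv2 : 0 < v.2)
    (hu2 : 0 < u.2) (hw2 : 0 < w.2)
    (h1 : 0 < fdet u v) (h2 : 0 < fdet v w) : 0 < fdet u w := by
  simp only [fdet] at h1 h2 ⊢
  nlinarith [mul_pos h1 hw2, mul_pos h2 hu2]

lemma fdet_chain (f : ℕ → ℤ × ℤ) (N : ℕ)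
    (hpos : ∀ k, k < N → 0 < (f k).1 ∧ 0 < (f k).2)
    (hstep : ∀ k, k + 1 < N → 0 < fdet (f k) (f (k + 1))) :
    ∀ i j, i < j → j < N → 0 < fdet (f i) (f j) := by
  intro i j
  induction j with
  | zero => omega
  | succ j ih =>
    intro hij hjN
    rcases Nat.lt_or_ge i j with h | h
    · exact fdet_trans_s18 (hpos j (by omega)).1 (hpos j (by omega)).2
        (hpos i (by omega)).2 (hpos (j + 1) hjN).2 (ih h (by omega)) (hstep j hjN)
    · have hij' : i = j := by omega
      subst hij'
      exact hstep i hjN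

/-- Entries of an `(n,m)`-antiperiodic SL2-tiling with positive fundamental rectangle
are Farey distances: there exist a Farey `n`-gon `u` and a Farey `m`-gon `w` with
`w 0 = (1,0)` (i.e. `∞`) and `w (m-1) = (0,1)` (i.e. `0`) such that
`a i j = |det(w_{(i−1) mod m}, u_j)|` on the fundamental rectangle. -/
theorem stmt18 (n m : ℕ) (hn : 3 ≤ n) (hm : 3 ≤ m) (a : ℤ → ℤ → ℤ)
    (hSL : IsSL2Tiling a) (hAp : IsAntiperiodic n m a) (hPos : HasPosRect n m a) :
    ∃ u w : ℕ → ℤ × ℤ,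
      IsFareyPolygon n u ∧ IsFareyPolygon m w ∧
      w 0 = (1, 0) ∧ w (m - 1) = (0, 1) ∧
      ∀ i j : ℕ, i < m → j < n →
        a (i : ℤ) (j : ℤ) = ((fdet (w ((i + m - 1) % m)) (u j)).natAbs : ℤ) := by
  have hm0 : (0 : ℤ) < (m : ℤ) := by exact_mod_cast (by omega : 0 < m)
  have hn0 : (0 : ℤ) < (n : ℤ) := by exact_mod_cast (by omega : 0 < n)
  have hApn : ∀ i j : ℤ, a i (j + (n : ℤ)) = -a i j := fun i j => (hAp i j).1
  have hApm : ∀ i j : ℤ, a (i + (m : ℤ)) j = -a i j := fun i j => (hAp i j).2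
  have sqn : ∀ k : ℤ, ∀ i j : ℤ, (a i (j + (n : ℤ) * k)) ^ 2 = (a i j) ^ 2 := by
    intro k
    induction k using Int.induction_on with
    | zero => intro i j; norm_num
    | succ k ih =>
      intro i j
      rw [show j + (n : ℤ) * ((k : ℤ) + 1) = (j + (n : ℤ) * (k : ℤ)) + (n : ℤ) from by ring,
        hApn, neg_sq]
      exact ih i j
    | pred k ih =>
      intro i j
      rw [show j + (n : ℤ) * (-(k : ℤ) - 1) = (j - (n : ℤ)) + (n : ℤ) * (-(k : ℤ)) from by ring,
        ih i (j - (n : ℤ))]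
      have h := hApn i (j - (n : ℤ))
      rw [show j - (n : ℤ) + (n : ℤ) = j from by ring] at h
      rw [h, neg_sq]
  have sqm : ∀ k : ℤ, ∀ i j : ℤ, (a (i + (m : ℤ) * k) j) ^ 2 = (a i j) ^ 2 := by
    intro k
    induction k using Int.induction_on with
    | zero => intro i j; norm_num
    | succ k ih =>
      intro i j
      rw [show i + (m : ℤ) * ((k : ℤ) + 1) = (i + (m : ℤ) * (k : ℤ)) + (m : ℤ) from by ring,
        hApm, neg_sq]
      exact ih i j
    | pred k ih =>
      intro i j
      rw [show i + (m : ℤ) * (-(k : ℤ) - 1) = (i - (m : ℤ)) + (m : ℤ) * (-(k : ℤ)) from by ring,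
        ih (i - (m : ℤ)) j]
      have h := hApm (i - (m : ℤ)) j
      rw [show i - (m : ℤ) + (m : ℤ) = i from by ring] at h
      rw [h, neg_sq]
  have hne : ∀ i j : ℤ, a i j ≠ 0 := by
    intro i j hz
    have hb1 : 0 ≤ i % (m : ℤ) := Int.emod_nonneg i (by omega)
    have hb2 : i % (m : ℤ) < (m : ℤ) := Int.emod_lt_of_pos i hm0
    have hb3 : 0 ≤ j % (n : ℤ) := Int.emod_nonneg j (by omega)
    have hb4 : j % (n : ℤ) < (n : ℤ) := Int.emod_lt_of_pos j hn0
    have hp := hPos (i % (m : ℤ)) (j % (n : ℤ)) hb1 (by omega) hb3 (by omega)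
    have d1 := Int.emod_add_mul_ediv i (m : ℤ)
    have d2 := Int.emod_add_mul_ediv j (n : ℤ)
    have e1 : (a i j) ^ 2 = (a (i % (m : ℤ)) (j % (n : ℤ))) ^ 2 := by
      calc (a i j) ^ 2
          = (a (i % (m : ℤ) + (m : ℤ) * (i / (m : ℤ)))
              (j % (n : ℤ) + (n : ℤ) * (j / (n : ℤ)))) ^ 2 := by rw [d1, d2]
        _ = (a (i % (m : ℤ) + (m : ℤ) * (i / (m : ℤ))) (j % (n : ℤ))) ^ 2 := sqn _ _ _
        _ = (a (i % (m : ℤ)) (j % (n : ℤ))) ^ 2 := sqm _ _ _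
    rw [hz] at e1
    nlinarith [hp]
  have hSL' : ∀ i i' j j' : ℤ, i' = i + 1 → j' = j + 1 →
      a i j * a i' j' - a i j' * a i' j = 1 := by
    rintro i i' j j' rfl rfl
    exact hSL i j
  have h00 : a 0 0 * a 1 1 - a 0 1 * a 1 0 = 1 := hSL' 0 1 0 1 (by norm_num) (by norm_num)
  have hApm0 : ∀ j : ℤ, a (m : ℤ) j = -a 0 j := by
    intro j; have := hApm 0 j; rwa [zero_add] at this
  have hApn0 : ∀ i : ℤ, a i (n : ℤ) = -a i 0 := by
    intro i; have := hApn i 0; rwa [zero_add] at this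
  -- Cramer identities for two consecutive rows
  have cram : ∀ i i' j0 j1 j2 : ℤ, i' = i + 1 → j1 = j0 + 1 → j2 = j1 + 1 →
      a i j2 + a i j0 = (a i j0 * a i' j2 - a i' j0 * a i j2) * a i j1 ∧
      a i' j2 + a i' j0 = (a i j0 * a i' j2 - a i' j0 * a i j2) * a i' j1 := by
    rintro i i' j0 j1 j2 rfl rfl rfl
    have h1 := hSL i j0
    have h2 := hSL i (j0 + 1)
    constructor
    · linear_combination (-(a i (j0 + 1 + 1))) * h1 - a i j0 * h2
    · linear_combination (-(a (i + 1) (j0 + 1 + 1))) * h1 - a (i + 1) j0 * h2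
  -- all rows satisfy the common column recurrence
  have hrec' : ∀ i j0 j1 j2 : ℤ, j1 = j0 + 1 → j2 = j1 + 1 →
      a i j2 + a i j0 = (a 0 j0 * a 1 j2 - a 1 j0 * a 0 j2) * a i j1 := by
    intro i
    induction i using Int.induction_on with
    | zero =>
      rintro j0 j1 j2 rfl rfl
      exact (cram 0 1 j0 _ _ (by norm_num) rfl rfl).1
    | succ k ih =>
      rintro j0 j1 j2 rfl rfl
      obtain ⟨h1, h2⟩ := cram (k : ℤ) ((k : ℤ) + 1) j0 _ _ rfl rfl rfl
      have hrow := ih j0 _ _ rfl rfl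
      have hs : a (k : ℤ) j0 * a ((k : ℤ) + 1) (j0 + 1 + 1)
            - a ((k : ℤ) + 1) j0 * a (k : ℤ) (j0 + 1 + 1)
          = a 0 j0 * a 1 (j0 + 1 + 1) - a 1 j0 * a 0 (j0 + 1 + 1) := by
        apply mul_right_cancel₀ (hne (k : ℤ) (j0 + 1))
        linarith
      rw [← hs]
      exact h2
    | pred k ih =>
      rintro j0 j1 j2 rfl rfl
      obtain ⟨h1, h2⟩ := cram (-(k : ℤ) - 1) (-(k : ℤ)) j0 _ _ (by ring) rfl rfl
      have hrow := ih j0 _ _ rfl rfl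
      have hs : a (-(k : ℤ) - 1) j0 * a (-(k : ℤ)) (j0 + 1 + 1)
            - a (-(k : ℤ)) j0 * a (-(k : ℤ) - 1) (j0 + 1 + 1)
          = a 0 j0 * a 1 (j0 + 1 + 1) - a 1 j0 * a 0 (j0 + 1 + 1) := by
        apply mul_right_cancel₀ (hne (-(k : ℤ)) (j0 + 1))
        linarith
      rw [← hs]
      exact h1
  -- the fundamental formula  a i j = det(w'_i, u_j)
  have hA : ∀ i j : ℤ, a i j =
      (a 0 0 * a i 1 - a 0 1 * a i 0) * a 1 j - (a 1 0 * a i 1 - a 1 1 * a i 0) * a 0 j := by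
    intro i
    have base0 : a i 0 =
        (a 0 0 * a i 1 - a 0 1 * a i 0) * a 1 0 - (a 1 0 * a i 1 - a 1 1 * a i 0) * a 0 0 := by
      linear_combination (-(a i 0)) * h00
    have base1 : a i 1 =
        (a 0 0 * a i 1 - a 0 1 * a i 0) * a 1 1 - (a 1 0 * a i 1 - a 1 1 * a i 0) * a 0 1 := by
      linear_combination (-(a i 1)) * h00
    suffices h : ∀ j : ℤ,
        (a i j = (a 0 0 * a i 1 - a 0 1 * a i 0) * a 1 j
          - (a 1 0 * a i 1 - a 1 1 * a i 0) * a 0 j) ∧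
        (a i (j + 1) = (a 0 0 * a i 1 - a 0 1 * a i 0) * a 1 (j + 1)
          - (a 1 0 * a i 1 - a 1 1 * a i 0) * a 0 (j + 1)) by
      intro j; exact (h j).1
    intro j
    induction j using Int.induction_on with
    | zero =>
      refine ⟨base0, ?_⟩
      rw [zero_add]
      exact base1
    | succ k ih =>
      refine ⟨ih.2, ?_⟩
      have h1 := hrec' i (k : ℤ) _ _ rfl rfl
      have h0 := hrec' 0 (k : ℤ) _ _ rfl rfl
      have hone := hrec' 1 (k : ℤ) _ _ rfl rfl
      linear_combination h1 - (a 0 0 * a i 1 - a 0 1 * a i 0) * hone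
        + (a 1 0 * a i 1 - a 1 1 * a i 0) * h0 - ih.1
        + (a 0 (k : ℤ) * a 1 ((k : ℤ) + 1 + 1) - a 1 (k : ℤ) * a 0 ((k : ℤ) + 1 + 1)) * ih.2
    | pred k ih =>
      constructor
      · have h1 := hrec' i (-(k : ℤ) - 1) (-(k : ℤ)) (-(k : ℤ) + 1) (by ring) rfl
        have h0 := hrec' 0 (-(k : ℤ) - 1) (-(k : ℤ)) (-(k : ℤ) + 1) (by ring) rfl
        have hone := hrec' 1 (-(k : ℤ) - 1) (-(k : ℤ)) (-(k : ℤ) + 1) (by ring) rfl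
        linear_combination h1 - (a 0 0 * a i 1 - a 0 1 * a i 0) * hone
          + (a 1 0 * a i 1 - a 1 1 * a i 0) * h0 - ih.2
          + (a 0 (-(k : ℤ) - 1) * a 1 (-(k : ℤ) + 1)
            - a 1 (-(k : ℤ) - 1) * a 0 (-(k : ℤ) + 1)) * ih.1
      · rw [show -(k : ℤ) - 1 + 1 = -(k : ℤ) from by ring]
        exact ih.1
  -- positivity on the fundamental rows/columns
  have posU : ∀ j : ℕ, j < n → 0 < a 0 (j : ℤ) ∧ 0 < a 1 (j : ℤ) := by
    intro j hj
    exact ⟨hPos 0 j (by omega) (by omega) (by omega) (by omega),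
      hPos 1 j (by omega) (by omega) (by omega) (by omega)⟩
  have posW : ∀ i : ℕ, i < m → 0 < a (i : ℤ) 0 ∧ 0 < a (i : ℤ) 1 := by
    intro i hi
    exact ⟨hPos i 0 (by omega) (by omega) (by omega) (by omega),
      hPos i 1 (by omega) (by omega) (by omega) (by omega)⟩
  -- chains of determinant positivity
  have chainU : ∀ i j : ℕ, i < j → j < n →
      0 < a 0 (i : ℤ) * a 1 (j : ℤ) - a 1 (i : ℤ) * a 0 (j : ℤ) := by
    intro i j hij hjn
    have h := fdet_chain (fun k : ℕ => ((a 0 (k : ℤ), a 1 (k : ℤ)) : ℤ × ℤ)) n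
      (fun k hk => posU k hk)
      (fun k hk => by
        have h := hSL' 0 1 (k : ℤ) ((k : ℤ) + 1) (by norm_num) rfl
        simp only [fdet]
        push_cast
        linarith [h]) i j hij hjn
    simpa [fdet] using h
  have chainW : ∀ i j : ℕ, i < j → j < m →
      0 < a (i : ℤ) 0 * a (j : ℤ) 1 - a (i : ℤ) 1 * a (j : ℤ) 0 := by
    intro i j hij hjm
    have h := fdet_chain (fun k : ℕ => ((a (k : ℤ) 0, a (k : ℤ) 1) : ℤ × ℤ)) m
      (fun k hk => posW k hk)
      (fun k hk => by
        have h := hSL' (k : ℤ) ((k : ℤ) + 1) 0 1 rfl (by norm_num)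
        simp only [fdet]
        push_cast
        linarith [h]) i j hij hjm
    simpa [fdet] using h
  -- the witnesses
  obtain ⟨U, hU⟩ : ∃ U : ℕ → ℤ × ℤ, ∀ j : ℕ, U j = (a 0 (j : ℤ), a 1 (j : ℤ)) :=
    ⟨_, fun _ => rfl⟩
  obtain ⟨W, hW⟩ : ∃ W : ℕ → ℤ × ℤ, ∀ k : ℕ,
      W k = (a 0 0 * a ((k : ℤ) + 1) 1 - a 0 1 * a ((k : ℤ) + 1) 0,
             a 1 0 * a ((k : ℤ) + 1) 1 - a 1 1 * a ((k : ℤ) + 1) 0) :=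
    ⟨_, fun _ => rfl⟩
  have plk : ∀ x y : ℤ,
      (a 0 0 * a x 1 - a 0 1 * a x 0) * (a 1 0 * a y 1 - a 1 1 * a y 0)
      - (a 1 0 * a x 1 - a 1 1 * a x 0) * (a 0 0 * a y 1 - a 0 1 * a y 0)
      = a x 0 * a y 1 - a x 1 * a y 0 := by
    intro x y
    linear_combination (a x 0 * a y 1 - a x 1 * a y 0) * h00
  have hWfd : ∀ i j : ℕ, fdet (W i) (W j) =
      a ((i : ℤ) + 1) 0 * a ((j : ℤ) + 1) 1 - a ((i : ℤ) + 1) 1 * a ((j : ℤ) + 1) 0 := by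
    intro i j
    rw [hW i, hW j]
    simp only [fdet]
    exact plk _ _
  have hWcons : ∀ k : ℕ, fdet (W k) (W (k + 1)) = 1 := by
    intro k
    rw [hWfd]
    push_cast
    have h := hSL' ((k : ℤ) + 1) ((k : ℤ) + 1 + 1) 0 1 rfl (by norm_num)
    linear_combination h
  have hW0 : W 0 = (1, 0) := by
    rw [hW]
    rw [show ((0 : ℕ) : ℤ) + 1 = 1 from by norm_num]
    simp only [Prod.mk.injEq]
    exact ⟨h00, by ring⟩
  have hcm : ((m - 1 : ℕ) : ℤ) + 1 = (m : ℤ) := by omega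
  have hcn : ((n - 1 : ℕ) : ℤ) = (n : ℤ) - 1 := by omega
  have hWm : W (m - 1) = (0, 1) := by
    rw [hW, hcm, hApm0 0, hApm0 1]
    simp only [Prod.mk.injEq]
    exact ⟨by ring, by linear_combination h00⟩
  refine ⟨U, W, ⟨?_, ?_, ?_, ?_⟩, ⟨?_, ?_, ?_, ?_⟩, hW0, hWm, ?_⟩
  -- U primitive
  · intro j hj
    rw [hU j]
    have hp := posU j hj
    refine ⟨?_, hp.2.le, fun h => absurd h hp.2.ne'⟩
    by_cases hj' : j + 1 < n
    · have h := hSL' 0 1 (j : ℤ) ((j : ℤ) + 1) (by norm_num) rfl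
      exact coprime_of_comb (p := a 1 ((j : ℤ) + 1)) (q := -(a 0 ((j : ℤ) + 1)))
        (by linear_combination h)
    · have hj2 : j = n - 1 := by omega
      subst hj2
      have h := hSL' 0 1 ((n : ℤ) - 1) (n : ℤ) (by norm_num) (by ring)
      rw [hApn0 0, hApn0 1] at h
      exact coprime_of_comb (p := -(a 1 0)) (q := a 0 0)
        (by rw [hcn]; linear_combination h)
  -- U det positivity
  · intro i j hij hjn
    rw [hU i, hU j]
    simp only [fdet]
    exact chainU i j hij hjn
  -- U consecutive
  · intro j hj
    rw [hU j, hU (j + 1)]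
    simp only [fdet]
    push_cast
    linear_combination hSL' 0 1 (j : ℤ) ((j : ℤ) + 1) (by norm_num) rfl
  -- U wrap
  · rw [hU 0, hU (n - 1)]
    simp only [fdet]
    rw [hcn]
    have h := hSL' 0 1 ((n : ℤ) - 1) (n : ℤ) (by norm_num) (by ring)
    rw [hApn0 0, hApn0 1] at h
    push_cast
    linear_combination h
  -- W primitive
  · intro k hk
    by_cases hk0 : k = 0
    · subst hk0
      rw [hW0]
      exact ⟨by decide, by decide, fun _ => rfl⟩
    · by_cases hkm : k = m - 1
      · subst hkm
        rw [hWm]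
        exact ⟨by decide, by decide, fun h => absurd h one_ne_zero⟩
      · have h2 := chainW 1 (k + 1) (by omega) (by omega)
        push_cast at h2
        have hc := hWcons k
        simp only [fdet] at hc
        refine ⟨coprime_of_comb (p := (W (k + 1)).2) (q := -((W (k + 1)).1))
          (by linear_combination hc), ?_, ?_⟩
        · rw [hW k]
          exact le_of_lt h2
        · intro h0
          rw [hW k] at h0
          exact absurd h0 (ne_of_gt h2)
  -- W det positivity
  · intro i j hij hjm
    rw [hWfd i j]
    by_cases hj1 : j = m - 1
    · subst hj1
      rw [hcm, hApm0 0, hApm0 1]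
      have h := chainW 0 (i + 1) (by omega) (by omega)
      push_cast at h
      linarith [h]
    · have h := chainW (i + 1) (j + 1) (by omega) (by omega)
      push_cast at h
      exact h
  -- W consecutive
  · intro k hk
    exact hWcons k
  -- W wrap
  · rw [hW0, hWm]
    decide
  -- the entries
  · intro i j him hjn
    rcases Nat.eq_zero_or_pos i with hi0 | hi1
    · subst hi0
      rw [show (0 + m - 1) % m = m - 1 from by
        rw [Nat.zero_add]; exact Nat.mod_eq_of_lt (by omega), hWm, hU j]
      have e2 : fdet ((0 : ℤ), (1 : ℤ)) (a 0 (j : ℤ), a 1 (j : ℤ)) = -(a 0 (j : ℤ)) := by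
        simp [fdet]
      rw [e2, Int.natAbs_neg,
        Int.natAbs_of_nonneg (le_of_lt (hPos 0 j (by omega) (by omega) (by omega) (by omega)))]
      norm_num
    · rw [show (i + m - 1) % m = i - 1 from by
        rw [show i + m - 1 = (i - 1) + m from by omega, Nat.add_mod_right]
        exact Nat.mod_eq_of_lt (by omega), hW (i - 1), hU j]
      rw [show ((i - 1 : ℕ) : ℤ) + 1 = (i : ℤ) from by omega]
      have e2 : fdet (a 0 0 * a (i : ℤ) 1 - a 0 1 * a (i : ℤ) 0,
          a 1 0 * a (i : ℤ) 1 - a 1 1 * a (i : ℤ) 0) (a 0 (j : ℤ), a 1 (j : ℤ))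
          = a (i : ℤ) (j : ℤ) := by
        simp only [fdet]
        exact (hA (i : ℤ) (j : ℤ)).symm
      rw [e2, Int.natAbs_of_nonneg
        (le_of_lt (hPos i j (by omega) (by omega) (by omega) (by omega)))]
end

section
/- Every Farey n-gon gives rise to a Coxeter–Conway frieze pattern of positive integers (Coxeter's formula c_{i,j} = d(v_{i−2}, v_j)): let (v_0, …, v_{n−1}) be a Farey n-gon and set c(k,l) = det(v_k, v_l). Then c(k,k) = 0 and c(k,k+1) = 1 for all admissible k, c(k,l) > 0 whenever 0 ≤ k < l ≤ n−1, and the unimodular frieze rule holds: c(k,l)·c(k+1,l+1) − c(k,l+1)·c(k+1,l) = 1 for all 0 ≤ k ≤ n−2 and 0 ≤ l ≤ n−2. -/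
/-- Every Farey `n`-gon gives rise to a Coxeter–Conway frieze pattern of positive
integers via `c(k,l) = det(v k, v l)`: the entries vanish on the diagonal, equal 1
on the superdiagonal, are positive above the diagonal, and satisfy the unimodular
frieze rule. -/
theorem stmt19 (n : ℕ) (hn : 3 ≤ n) (v : ℕ → ℤ × ℤ) (hv : IsFareyPolygon n v)
    (c : ℕ → ℕ → ℤ) (hc : ∀ k l, c k l = fdet (v k) (v l)) :
    (∀ k, c k k = 0) ∧
    (∀ k, k + 1 ≤ n - 1 → c k (k + 1) = 1) ∧
    (∀ k l, k < l → l ≤ n - 1 → 0 < c k l) ∧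
    (∀ k l, k ≤ n - 2 → l ≤ n - 2 →
      c k l * c (k + 1) (l + 1) - c k (l + 1) * c (k + 1) l = 1) := by
  obtain ⟨hprim, hpos, hone, _⟩ := hv
  refine ⟨?_, ?_, ?_, ?_⟩
  · intro k; rw [hc]; simp [fdet]; ring
  · intro k hk; rw [hc]; exact hone k (by omega)
  · intro k l hkl hl; rw [hc]; exact hpos k l hkl (by omega)
  · intro k l hk hl
    have h1 : fdet (v k) (v (k + 1)) = 1 := hone k (by omega)
    have h2 : fdet (v l) (v (l + 1)) = 1 := hone l (by omega)
    have key : c k l * c (k + 1) (l + 1) - c k (l + 1) * c (k + 1) l =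
        fdet (v k) (v (k + 1)) * fdet (v l) (v (l + 1)) := by
      simp only [hc, fdet]; ring
    rw [key, h1, h2, mul_one]
end
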